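/- arXiv:2404.06002 — 5 statements merged into one kernel-verified Lean document; each statement's English description precedes it below -/
import Mathlib

section
/- Let F be a forest on n vertices with cc(F) connected components, and write X_F = Σ_{λ ⊢ n} c_λ st_λ in the star-basis. Then for every integer m > cc(F), the sum of the coefficients c_λ over all partitions λ of n with exactly m parts equals 0. -/
open scoped Classical

namespace CSFPaper

noncomputable section

/-- Chromatic symmetric function: the coefficient of a monomial `d` is the number of
proper colorings `κ : V → ℕ` whose color-count vector is `d`. -/
def csf {V : Type*} [Fintype V] (G : SimpleGraph V) : MvPowerSeries ℕ ℚ :=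
  fun d : ℕ →₀ ℕ =>
    (Nat.card {κ : V → ℕ //
      (∀ u w : V, G.Adj u w → κ u ≠ κ w) ∧
      ∀ i : ℕ, d i = Nat.card {v : V // κ v = i}} : ℚ)

/-- The star graph on `k` vertices: vertex `0` is adjacent to all other vertices. -/
def starGraph (k : ℕ) : SimpleGraph (Fin k) where
  Adj a b := a ≠ b ∧ (a.val = 0 ∨ b.val = 0)
  symm := ⟨fun a b h => ⟨h.1.symm, h.2.symm⟩⟩
  loopless := ⟨fun a h => h.1 rfl⟩

/-- The star-basis element `st_λ`. -/
def stPart {n : ℕ} (p : Nat.Partition n) : MvPowerSeries ℕ ℚ :=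
  (p.parts.map fun k => csf (starGraph k)).prod

/-- The parts of a multiset of naturals, in nonincreasing order. -/
def descSort (m : Multiset ℕ) : List ℕ := (m.sort (· ≤ ·)).reverse

/-- Lexicographic (strict) order on partitions presented as multisets. -/
def msLexLT (a b : Multiset ℕ) : Prop := List.Lex (· < ·) (descSort a) (descSort b)

def msLexLE (a b : Multiset ℕ) : Prop := a = b ∨ msLexLT a b

/-- `p` is the leading partition of the expansion with coefficients `c`:
it has a nonzero coefficient and is lexicographically smallest such. -/
def IsLeading {n : ℕ} (c : Nat.Partition n → ℚ) (p : Nat.Partition n) : Prop :=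
  c p ≠ 0 ∧ ∀ q : Nat.Partition n, c q ≠ 0 → msLexLE p.parts q.parts

variable {V : Type*}

/-- The set of internal edges: edges whose two endpoints both have degree at least 2. -/
def internalEdges [Fintype V] (G : SimpleGraph V) : Set (Sym2 V) :=
  {e | e ∈ G.edgeSet ∧ ∀ v ∈ e, 2 ≤ G.degree v}

def numInternalEdges [Fintype V] (G : SimpleGraph V) : ℕ := Nat.card (internalEdges G)

/-- The graph obtained from `G` by deleting all internal edges. -/
def lcGraph [Fintype V] (G : SimpleGraph V) : SimpleGraph V := G.deleteEdges (internalEdges G)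

/-- The multiset of orders of the connected components of `G`. -/
def compSizes [Fintype V] (G : SimpleGraph V) : Multiset ℕ :=
  ((Finset.univ : Finset V).image G.connectedComponentMk).val.map
    fun C => Nat.card C.supp

/-- The leaf component partition `λ_LC(F) = λ(F \ I(F))` (as a multiset of component orders). -/
def lcMultiset [Fintype V] (G : SimpleGraph V) : Multiset ℕ := compSizes (lcGraph G)

/-- The order of the leaf component of `G` containing `x`. -/
def leafCompOrder [Fintype V] (G : SimpleGraph V) (x : V) : ℕ :=
  Nat.card ((lcGraph G).connectedComponentMk x).supp

/-- A deep vertex: an internal vertex all of whose neighbors are internal. -/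
def IsDeep [Fintype V] (G : SimpleGraph V) (v : V) : Prop :=
  2 ≤ G.degree v ∧ ∀ u, G.Adj v u → 2 ≤ G.degree u

/-- Dot contraction of the edge `uv`, realized on the same vertex set: the edge is
contracted onto `u`, and `v` becomes the new isolated vertex. -/
def dotContract (G : SimpleGraph V) (u v : V) : SimpleGraph V where
  Adj a b := a ≠ b ∧ a ≠ v ∧ b ≠ v ∧
    (G.Adj a b ∨ (a = u ∧ G.Adj v b) ∨ (b = u ∧ G.Adj a v))
  symm := by
    constructor
    rintro a b ⟨h1, h2, h3, h4⟩
    refine ⟨h1.symm, h3, h2, ?_⟩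
    rcases h4 with h | ⟨rfl, h⟩ | ⟨rfl, h⟩
    · exact Or.inl h.symm
    · exact Or.inr (Or.inr ⟨rfl, h.symm⟩)
    · exact Or.inr (Or.inl ⟨rfl, h.symm⟩)
  loopless := by constructor; rintro a ⟨h, -⟩; exact h rfl

/-- Leaf contraction of the edge `uv`, realized on the same vertex set: the edge is
contracted onto `u`, and `v` becomes the new pendant leaf `ℓ_e` attached to `u`. -/
def leafContract (G : SimpleGraph V) (u v : V) : SimpleGraph V where
  Adj a b := a ≠ b ∧ ((a = u ∧ b = v) ∨ (a = v ∧ b = u) ∨ (dotContract G u v).Adj a b)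
  symm := by
    constructor
    rintro a b ⟨h1, h2⟩
    refine ⟨h1.symm, ?_⟩
    rcases h2 with ⟨rfl, rfl⟩ | ⟨rfl, rfl⟩ | h
    · exact Or.inr (Or.inl ⟨rfl, rfl⟩)
    · exact Or.inl ⟨rfl, rfl⟩
    · exact Or.inr (Or.inr ((dotContract G u v).adj_symm h))
  loopless := by constructor; rintro a ⟨h, -⟩; exact h rfl



section Aux


noncomputable def phi (q N : ℕ) (f : MvPowerSeries ℕ ℚ) : ℚ :=
  ∑ d ∈ (Finset.range q).finsuppAntidiag N, MvPowerSeries.coeff d f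

lemma sum_finsupp_eq {q : ℕ} {N : ℕ} {d : ℕ →₀ ℕ}
    (hd : d ∈ (Finset.range q).finsuppAntidiag N) : (Finset.range q).sum d = N :=
  (Finset.mem_finsuppAntidiag.mp hd).1

lemma phi_mul (q N : ℕ) (f g : MvPowerSeries ℕ ℚ) :
    phi q N (f * g) = ∑ ab ∈ Finset.HasAntidiagonal.antidiagonal N, phi q ab.1 f * phi q ab.2 g := by
  unfold phi
  simp_rw [MvPowerSeries.coeff_mul, Finset.sum_mul_sum]
  simp_rw [← Finset.sum_product']
  rw [Finset.sum_sigma', Finset.sum_sigma']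
  refine Finset.sum_nbij'
    (fun x => ⟨((Finset.range q).sum x.2.1, (Finset.range q).sum x.2.2), x.2⟩)
    (fun y => ⟨y.2.1 + y.2.2, y.2⟩) ?_ ?_ ?_ ?_ ?_
  · rintro ⟨d, p1, p2⟩ hx
    simp only [Finset.mem_sigma, Finset.mem_finsuppAntidiag, Finset.HasAntidiagonal.mem_antidiagonal,
      Finset.mem_product] at hx ⊢
    obtain ⟨⟨hsum, hsupp⟩, hp⟩ := hx
    have hsupp1 : p1.support ⊆ Finset.range q := by
      intro i hi
      apply hsupp
      rw [Finsupp.mem_support_iff] at hi ⊢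
      rw [← hp]
      simp only [Finsupp.add_apply]
      omega
    have hsupp2 : p2.support ⊆ Finset.range q := by
      intro i hi
      apply hsupp
      rw [Finsupp.mem_support_iff] at hi ⊢
      rw [← hp]
      simp only [Finsupp.add_apply]
      omega
    refine ⟨?_, ⟨trivial, hsupp1⟩, ⟨trivial, hsupp2⟩⟩
    rw [← hsum, ← hp]
    simp [Finset.sum_add_distrib]
  · rintro ⟨⟨a, b⟩, p1, p2⟩ hy
    simp only [Finset.mem_sigma, Finset.mem_finsuppAntidiag, Finset.mem_product,
      Finset.HasAntidiagonal.mem_antidiagonal, Finset.HasAntidiagonal.mem_antidiagonal] at hy ⊢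
    obtain ⟨hab, ⟨h1, hs1⟩, ⟨h2, hs2⟩⟩ := hy
    refine ⟨⟨?_, ?_⟩, trivial⟩
    · simp only [Finsupp.coe_add, Pi.add_apply, Finset.sum_add_distrib, h1, h2, hab]
    · exact (Finsupp.support_add).trans (Finset.union_subset hs1 hs2)
  · rintro ⟨d, p1, p2⟩ hx
    simp only [Finset.mem_sigma, Finset.mem_finsuppAntidiag, Finset.HasAntidiagonal.mem_antidiagonal] at hx
    obtain ⟨-, hp⟩ := hx
    subst hp
    rfl
  · rintro ⟨⟨a, b⟩, p1, p2⟩ hy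
    simp only [Finset.mem_sigma, Finset.mem_finsuppAntidiag, Finset.mem_product,
      Finset.HasAntidiagonal.mem_antidiagonal] at hy
    obtain ⟨hab, ⟨h1, hs1⟩, ⟨h2, hs2⟩⟩ := hy
    subst h1
    subst h2
    rfl
  · rintro ⟨d, p1, p2⟩ hx
    rfl


variable {V : Type} [Fintype V]


def properCount (G : SimpleGraph V) (q : ℕ) : ℕ :=
  Nat.card {κ : V → Fin q // ∀ u w : V, G.Adj u w → κ u ≠ κ w}

lemma sum_fibers {q : ℕ} (κ : V → ℕ) (hκ : ∀ v, κ v < q) :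
    ∑ i ∈ Finset.range q, Nat.card {v : V // κ v = i} = Fintype.card V := by
  simp_rw [Nat.card_eq_fintype_card, Fintype.card_subtype]
  rw [← Finset.card_univ, Finset.card_eq_sum_card_fiberwise
    (fun v _ => Finset.mem_range.mpr (hκ v))]

lemma csf_apply_ne_zero {G : SimpleGraph V} {q : ℕ} {d : ℕ →₀ ℕ}
    (h : csf G d ≠ 0) (hsupp : d.support ⊆ Finset.range q) :
    (Finset.range q).sum d = Fintype.card V := by
  have : Nonempty {κ : V → ℕ //
      (∀ u w : V, G.Adj u w → κ u ≠ κ w) ∧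
      ∀ i : ℕ, d i = Nat.card {v : V // κ v = i}} := by
    by_contra hne
    rw [not_nonempty_iff] at hne
    apply h
    show ((Nat.card _ : ℕ) : ℚ) = 0
    rw [@Nat.card_of_isEmpty _ hne, Nat.cast_zero]
  obtain ⟨κ, hprop, hdist⟩ := this
  have hbound : ∀ v, κ v < q := by
    intro v
    have h1 : d (κ v) ≠ 0 := by
      rw [hdist (κ v)]
      have : Nonempty {w : V // κ w = κ v} := ⟨⟨v, rfl⟩⟩
      exact Nat.card_pos.ne'
    exact Finset.mem_range.mp (hsupp (Finsupp.mem_support_iff.mpr h1))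
  calc (Finset.range q).sum d = ∑ i ∈ Finset.range q, Nat.card {v : V // κ v = i} := by
        exact Finset.sum_congr rfl fun i _ => hdist i
    _ = Fintype.card V := sum_fibers κ hbound

lemma phi_csf_ne (G : SimpleGraph V) {q N : ℕ} (hN : N ≠ Fintype.card V) :
    phi q N (csf G) = 0 := by
  apply Finset.sum_eq_zero
  intro d hd
  rw [Finset.mem_finsuppAntidiag] at hd
  by_contra h
  exact hN (hd.1 ▸ csf_apply_ne_zero h hd.2)

/-- color distribution of a coloring -/
def colorDist {q : ℕ} (κ : V → Fin q) : ℕ →₀ ℕ :=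
  ∑ v : V, Finsupp.single ((κ v : ℕ)) 1

lemma colorDist_apply {q : ℕ} (κ : V → Fin q) (i : ℕ) :
    colorDist κ i = Nat.card {v : V // (κ v : ℕ) = i} := by
  rw [Nat.card_eq_fintype_card, Fintype.card_subtype, colorDist]
  rw [Finset.sum_apply']
  simp_rw [Finsupp.single_apply]
  rw [Finset.card_filter]

lemma colorDist_mem {q : ℕ} (κ : V → Fin q) :
    colorDist κ ∈ (Finset.range q).finsuppAntidiag (Fintype.card V) := by
  rw [Finset.mem_finsuppAntidiag]
  constructor
  · calc (Finset.range q).sum (colorDist κ)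
        = ∑ i ∈ Finset.range q, Nat.card {v : V // (κ v : ℕ) = i} := by
          exact Finset.sum_congr rfl fun i _ => colorDist_apply κ i
      _ = Fintype.card V := sum_fibers _ (fun v => (κ v).isLt)
  · intro i hi
    rw [Finsupp.mem_support_iff, colorDist_apply] at hi
    have : Nonempty {v : V // (κ v : ℕ) = i} := by
      by_contra hne
      rw [not_nonempty_iff] at hne
      exact hi (Nat.card_of_isEmpty)
    obtain ⟨v, hv⟩ := this
    exact Finset.mem_range.mpr (hv ▸ (κ v).isLt)

lemma phi_csf (G : SimpleGraph V) (q : ℕ) :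
    phi q (Fintype.card V) (csf G) = (properCount G q : ℚ) := by
  classical
  have key : ∑ d ∈ (Finset.range q).finsuppAntidiag (Fintype.card V),
      Nat.card {κ : V → ℕ //
        (∀ u w : V, G.Adj u w → κ u ≠ κ w) ∧
        ∀ i : ℕ, d i = Nat.card {v : V // κ v = i}} = properCount G q := by
    set T := {κ : V → Fin q // ∀ u w : V, G.Adj u w → κ u ≠ κ w} with hT
    have hpc : properCount G q = Fintype.card T := Nat.card_eq_fintype_card
    rw [hpc]
    conv_rhs =>
      rw [← Finset.card_univ,
        Finset.card_eq_sum_card_fiberwise (f := fun κ : T => colorDist κ.1)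
          (t := (Finset.range q).finsuppAntidiag (Fintype.card V))
          (fun κ _ => colorDist_mem κ.1)]
    apply Finset.sum_congr rfl
    intro d hd
    rw [Finset.mem_finsuppAntidiag] at hd
    rw [← Fintype.card_subtype, ← Nat.card_eq_fintype_card]
    apply Nat.card_congr
    have hbound : ∀ (κ' : V → ℕ), (∀ i, d i = Nat.card {v : V // κ' v = i}) → ∀ v, κ' v < q := by
      intro κ' hd' v
      have h1 : d (κ' v) ≠ 0 := by
        rw [hd' (κ' v)]
        have : Nonempty {w : V // κ' w = κ' v} := ⟨⟨v, rfl⟩⟩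
        exact Nat.card_pos.ne'
      exact Finset.mem_range.mp (hd.2 (Finsupp.mem_support_iff.mpr h1))
    exact
      { toFun := fun y =>
          ⟨⟨fun v => ⟨y.1 v, hbound y.1 y.2.2 v⟩,
            fun u w ha h => y.2.1 u w ha (congrArg Fin.val h)⟩,
           by
             ext i
             rw [colorDist_apply]
             exact (y.2.2 i).symm⟩
        invFun := fun x =>
          ⟨fun v => (x.1.1 v : ℕ),
           fun u w ha h => x.1.2 u w ha (Fin.val_injective h),
           fun i => by rw [← colorDist_apply, x.2]⟩
        left_inv := fun y => by
          apply Subtype.ext; funext v; rfl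
        right_inv := fun x => by
          apply Subtype.ext; apply Subtype.ext; funext v; rfl }
  rw [phi, ← key]
  push_cast
  rfl


lemma properCount_star (m q : ℕ) :
    properCount (starGraph (m + 1)) q = q * (q - 1) ^ m := by
  have e : {κ : Fin (m+1) → Fin q // ∀ u w : Fin (m+1), (starGraph (m+1)).Adj u w → κ u ≠ κ w}
      ≃ (Σ _c : Fin q, (Fin m → {x : Fin q // x ≠ _c})) :=
    { toFun := fun κ =>
        ⟨κ.1 0, fun j => ⟨κ.1 j.succ, κ.2 j.succ 0 ⟨Fin.succ_ne_zero j, Or.inr rfl⟩⟩⟩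
      invFun := fun y =>
        ⟨fun i => Fin.cases y.1 (fun j => (y.2 j).1) i, by
          intro u w hadj
          obtain ⟨hne, h0⟩ := hadj
          rcases h0 with h0 | h0
          · have hu : u = 0 := Fin.ext h0
            subst hu
            obtain ⟨j, rfl⟩ := Fin.eq_succ_of_ne_zero (Ne.symm hne)
            simp only [Fin.cases_zero, Fin.cases_succ]
            exact fun h => (y.2 j).2 h.symm
          · have hw : w = 0 := Fin.ext h0
            subst hw
            obtain ⟨j, rfl⟩ := Fin.eq_succ_of_ne_zero hne
            simp only [Fin.cases_zero, Fin.cases_succ]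
            exact (y.2 j).2⟩
      left_inv := fun κ => by
        apply Subtype.ext
        funext i
        induction i using Fin.cases with
        | zero => simp
        | succ j => simp
      right_inv := fun y => by
        refine Sigma.ext (by simp) ?_
        simp only [Fin.cases_zero, Fin.cases_succ]
        rfl }
  rw [properCount, Nat.card_congr e, Nat.card_eq_fintype_card, Fintype.card_sigma]
  have hcard : ∀ c : Fin q, Fintype.card {x : Fin q // x ≠ c} = q - 1 := by
    intro c
    rw [Fintype.card_subtype_compl, Fintype.card_subtype_eq, Fintype.card_fin]
  simp_rw [Fintype.card_fun, hcard, Fintype.card_fin]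
  rw [Finset.sum_const, Finset.card_univ, Fintype.card_fin, smul_eq_mul]

lemma phi_one (q N : ℕ) : phi q N 1 = if N = 0 then 1 else 0 := by
  unfold phi
  rcases eq_or_ne N 0 with rfl | hN
  · rw [if_pos rfl]
    have : (Finset.range q).finsuppAntidiag 0 = {0} := by
      ext d
      simp only [Finset.mem_finsuppAntidiag, Finset.mem_singleton]
      constructor
      · rintro ⟨hsum, hsupp⟩
        ext i
        rcases Decidable.em (i ∈ Finset.range q) with hi | hi
        · have := Finset.sum_eq_zero_iff.mp hsum i hi
          simpa using this
        · by_contra h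
          exact hi (hsupp (Finsupp.mem_support_iff.mpr h))
      · rintro rfl
        simp
    rw [this, Finset.sum_singleton, MvPowerSeries.coeff_one, if_pos rfl]
  · rw [if_neg hN]
    apply Finset.sum_eq_zero
    intro d hd
    rw [Finset.mem_finsuppAntidiag] at hd
    rw [MvPowerSeries.coeff_one, if_neg]
    rintro rfl
    exact hN (by simpa using hd.1.symm)


lemma phi_csf_star (q a k : ℕ) :
    phi q a (csf (starGraph k)) = if a = k then (properCount (starGraph k) q : ℚ) else 0 := by
  rcases eq_or_ne a k with rfl | h
  · rw [if_pos rfl]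
    have := phi_csf (starGraph a) q
    simpa [Fintype.card_fin] using this
  · rw [if_neg h]
    exact phi_csf_ne (starGraph k) (by simpa [Fintype.card_fin] using h)

lemma phi_listProd (q : ℕ) (L : List ℕ) (N : ℕ) :
    phi q N ((L.map fun k => csf (starGraph k)).prod) =
      if N = L.sum then (L.map fun k => (properCount (starGraph k) q : ℚ)).prod else 0 := by
  induction L generalizing N with
  | nil => simpa using phi_one q N
  | cons k L ih =>
    rw [List.map_cons, List.prod_cons, phi_mul]
    have hterm : ∀ ab ∈ Finset.HasAntidiagonal.antidiagonal N,
        phi q ab.1 (csf (starGraph k)) * phi q ab.2 ((L.map fun k => csf (starGraph k)).prod)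
          = if ab = (k, L.sum) then (properCount (starGraph k) q : ℚ) *
              (L.map fun k => (properCount (starGraph k) q : ℚ)).prod else 0 := by
      intro ab _
      rw [phi_csf_star, ih]
      rcases eq_or_ne ab (k, L.sum) with rfl | hab
      · simp
      · rw [if_neg hab]
        rcases eq_or_ne ab.1 k with h1 | h1
        · rcases eq_or_ne ab.2 L.sum with h2 | h2
          · exact absurd (Prod.ext h1 h2) hab
          · rw [if_neg h2, mul_zero]
        · rw [if_neg h1, zero_mul]
    rw [Finset.sum_congr rfl hterm, Finset.sum_ite_eq' (Finset.HasAntidiagonal.antidiagonal N) ((k, L.sum)) _]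
    by_cases h : (k, L.sum) ∈ Finset.HasAntidiagonal.antidiagonal N
    · have hN : N = k + L.sum := by
        rw [Finset.HasAntidiagonal.mem_antidiagonal] at h
        omega
      rw [if_pos h, if_pos (by simpa using hN), List.map_cons, List.prod_cons]
    · have hN : ¬ (N = k + L.sum) := by
        rw [Finset.HasAntidiagonal.mem_antidiagonal] at h
        omega
      rw [if_neg h, if_neg (by simpa using hN)]

lemma phi_stPart {n : ℕ} (q : ℕ) (p : Nat.Partition n) :
    phi q n (stPart p) =
      (p.parts.map fun k => (properCount (starGraph k) q : ℚ)).prod := by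
  obtain ⟨L, hL⟩ : ∃ L : List ℕ, p.parts = ↑L := ⟨p.parts.toList, (Multiset.coe_toList _).symm⟩
  rw [stPart, hL]
  rw [show ((L : Multiset ℕ).map fun k => csf (starGraph k)) = ↑(L.map fun k => csf (starGraph k)) from rfl]
  rw [Multiset.prod_coe]
  rw [show ((L : Multiset ℕ).map fun k => (properCount (starGraph k) q : ℚ)) = ↑(L.map fun k => (properCount (starGraph k) q : ℚ)) from rfl]
  rw [Multiset.prod_coe]
  rw [phi_listProd, if_pos]
  have := p.parts_sum
  rw [hL] at this
  exact (by simpa using this.symm)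

/-- recolor the component of `v` by a permutation of colors -/
def recol {q : ℕ} (H : SimpleGraph V) (v : V) (σ : Equiv.Perm (Fin q)) (κ : V → Fin q) :
    V → Fin q := fun a => if H.Reachable a v then σ (κ a) else κ a

lemma recol_proper {q : ℕ} {H : SimpleGraph V} {v : V} (σ : Equiv.Perm (Fin q))
    {κ : V → Fin q} (hκ : ∀ a b : V, H.Adj a b → κ a ≠ κ b) :
    ∀ a b : V, H.Adj a b → recol H v σ κ a ≠ recol H v σ κ b := by
  intro a b hab
  unfold recol
  by_cases hr : H.Reachable a v
  · rw [if_pos hr, if_pos ((hab.symm.reachable).trans hr)]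
    exact fun h => hκ a b hab (σ.injective h)
  · rw [if_neg hr, if_neg (fun h => hr ((hab.reachable).trans h))]
    exact hκ a b hab

lemma recol_recol {q : ℕ} (H : SimpleGraph V) (v : V) (x y : Fin q) (κ : V → Fin q) :
    recol H v (Equiv.swap x y) (recol H v (Equiv.swap x y) κ) = κ := by
  funext a
  unfold recol
  by_cases hr : H.Reachable a v
  · rw [if_pos hr, if_pos hr, Equiv.swap_apply_self]
  · rw [if_neg hr, if_neg hr]

lemma recol_reach {q : ℕ} {H : SimpleGraph V} {v a : V} (h : H.Reachable a v)
    (σ : Equiv.Perm (Fin q)) (κ : V → Fin q) : recol H v σ κ a = σ (κ a) := if_pos h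

lemma recol_not_reach {q : ℕ} {H : SimpleGraph V} {v a : V} (h : ¬H.Reachable a v)
    (σ : Equiv.Perm (Fin q)) (κ : V → Fin q) : recol H v σ κ a = κ a := if_neg h

lemma properCount_eq_q_mul {H : SimpleGraph V} {u v : V} (hreach : ¬H.Reachable u v) (q : ℕ) :
    properCount H q =
      q * Nat.card {κ : V → Fin q // (∀ a b : V, H.Adj a b → κ a ≠ κ b) ∧ κ u = κ v} := by
  have hvv : H.Reachable v v := SimpleGraph.Reachable.refl v
  have e : {κ : V → Fin q // ∀ a b : V, H.Adj a b → κ a ≠ κ b} ≃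
      Fin q × {κ : V → Fin q // (∀ a b : V, H.Adj a b → κ a ≠ κ b) ∧ κ u = κ v} :=
    { toFun := fun κ =>
        (κ.1 v,
         ⟨recol H v (Equiv.swap (κ.1 v) (κ.1 u)) κ.1,
          recol_proper _ κ.2,
          by
            rw [recol_reach hvv, recol_not_reach hreach, Equiv.swap_apply_left]⟩)
      invFun := fun x =>
        ⟨recol H v (Equiv.swap (x.2.1 u) x.1) x.2.1, recol_proper _ x.2.2.1⟩
      left_inv := fun κ => by
        apply Subtype.ext
        have hu : recol H v (Equiv.swap (κ.1 v) (κ.1 u)) κ.1 u = κ.1 u :=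
          recol_not_reach hreach _ _
        dsimp only
        rw [hu, Equiv.swap_comm, recol_recol]
      right_inv := fun x => by
        obtain ⟨c, κ', hκ', huv⟩ := x
        have hvc : recol H v (Equiv.swap (κ' u) c) κ' v = c := by
          rw [recol_reach hvv, ← huv, Equiv.swap_apply_left]
        have huc : recol H v (Equiv.swap (κ' u) c) κ' u = κ' u :=
          recol_not_reach hreach _ _
        refine Prod.ext hvc ?_
        apply Subtype.ext
        dsimp only
        rw [hvc, huc, Equiv.swap_comm, recol_recol] }
  rw [properCount, Nat.card_congr e, Nat.card_prod, Nat.card_eq_fintype_card (α := Fin q),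
    Fintype.card_fin]

lemma properCount_split {F : SimpleGraph V} {u v : V} (huv : F.Adj u v) (q : ℕ) :
    properCount F q +
        Nat.card {κ : V → Fin q //
          (∀ a b : V, (F.deleteEdges {s(u, v)}).Adj a b → κ a ≠ κ b) ∧ κ u = κ v} =
      properCount (F.deleteEdges {s(u, v)}) q := by
  set F' := F.deleteEdges {s(u, v)} with hF'
  have hiff : ∀ κ : V → Fin q,
      (∀ a b : V, F.Adj a b → κ a ≠ κ b) ↔
        ((∀ a b : V, F'.Adj a b → κ a ≠ κ b) ∧ κ u ≠ κ v) := by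
    intro κ
    constructor
    · intro h
      exact ⟨fun a b hab => h a b ((SimpleGraph.deleteEdges_adj).mp hab).1, h u v huv⟩
    · rintro ⟨h, huvne⟩ a b hab
      by_cases he : s(a, b) = s(u, v)
      · rw [Sym2.eq, Sym2.rel_iff', Prod.mk.injEq, Prod.swap_prod_mk, Prod.mk.injEq] at he
        rcases he with ⟨rfl, rfl⟩ | ⟨rfl, rfl⟩
        · exact huvne
        · exact fun hh => huvne hh.symm
      · exact h a b (SimpleGraph.deleteEdges_adj.mpr ⟨hab, by simpa using he⟩)
  have h1 : properCount F q =
      Nat.card {κ : V → Fin q // (∀ a b : V, F'.Adj a b → κ a ≠ κ b) ∧ κ u ≠ κ v} := by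
    rw [properCount]
    exact Nat.card_congr (Equiv.subtypeEquivRight hiff)
  rw [h1, properCount]
  -- split the subtype {κ // A κ} into B and ¬B parts
  have key : ∀ (A : (V → Fin q) → Prop) (B : (V → Fin q) → Prop),
      Nat.card {κ : V → Fin q // A κ ∧ ¬B κ} + Nat.card {κ : V → Fin q // A κ ∧ B κ}
        = Nat.card {κ : V → Fin q // A κ} := by
    intro A B
    simp only [Nat.card_eq_fintype_card, Fintype.card_subtype]
    have := Finset.card_filter_add_card_filter_not
      (s := Finset.univ.filter A) (p := B)
    rw [Finset.filter_filter, Finset.filter_filter] at this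
    rw [← this, add_comm]
  exact key _ (fun κ => κ u = κ v)

lemma isAcyclic_deleteEdges {F : SimpleGraph V} (hF : F.IsAcyclic) (s : Set (Sym2 V)) :
    (F.deleteEdges s).IsAcyclic := fun _v c hc =>
  hF (c.mapLe (SimpleGraph.deleteEdges_le s)) (hc.mapLe _)

lemma properCount_forest (E : ℕ) (F : SimpleGraph V) (hF : F.IsAcyclic)
    (hE : Nat.card F.edgeSet = E) (q : ℕ) :
    (properCount F q : ℚ) * (q : ℚ) ^ E =
      (q : ℚ) ^ (Fintype.card V) * ((q : ℚ) - 1) ^ E := by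
  induction E generalizing F with
  | zero =>
    have hfin : Finite ↥F.edgeSet := Set.Finite.to_subtype (Set.toFinite _)
    have hempty : IsEmpty ↥F.edgeSet := by
      rcases Nat.card_eq_zero.mp hE with h | h
      · exact h
      · exact absurd hfin h.not_finite
    have hnoadj : ∀ a b : V, ¬F.Adj a b := fun a b hab =>
      hempty.elim ⟨s(a, b), (SimpleGraph.mem_edgeSet F).mpr hab⟩
    have hcount : properCount F q = q ^ Fintype.card V := by
      rw [properCount,
        Nat.card_congr (Equiv.subtypeUnivEquiv (p := fun κ : V → Fin q =>
          ∀ a b : V, F.Adj a b → κ a ≠ κ b)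
          (fun κ a b hab => absurd hab (hnoadj a b)))]
      simp [Nat.card_eq_fintype_card, Fintype.card_fun]
    rw [hcount, pow_zero, pow_zero, mul_one, mul_one]
    push_cast
    rfl
  | succ E ih =>
    have hne : Nonempty F.edgeSet := (Nat.card_ne_zero.mp (hE ▸ Nat.succ_ne_zero E)).1
    obtain ⟨e, he⟩ := hne
    induction e using Sym2.ind with
    | _ u v =>
    have huv : F.Adj u v := he
    set F' := F.deleteEdges {s(u, v)} with hF'def
    have hF' : F'.IsAcyclic := isAcyclic_deleteEdges hF _
    have hE' : Nat.card F'.edgeSet = E := by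
      rw [hF'def, SimpleGraph.edgeSet_deleteEdges, Nat.card_coe_set_eq,
        Set.ncard_diff_singleton_of_mem he]
      rw [Nat.card_coe_set_eq] at hE
      omega
    have hbridge : ¬F'.Reachable u v :=
      (SimpleGraph.isBridge_iff.mp (SimpleGraph.isAcyclic_iff_forall_adj_isBridge.mp hF huv))
    have hsplit := properCount_split huv q
    have hmul := properCount_eq_q_mul hbridge q
    have ih' := ih F' hF' hE'
    set M : ℕ := Nat.card {κ : V → Fin q //
      (∀ a b : V, F'.Adj a b → κ a ≠ κ b) ∧ κ u = κ v} with hM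
    have hA : (properCount F q : ℚ) + (M : ℚ) = (properCount F' q : ℚ) := by
      exact_mod_cast congrArg (Nat.cast : ℕ → ℚ) hsplit
    have hB : (properCount F' q : ℚ) = (q : ℚ) * (M : ℚ) := by
      exact_mod_cast congrArg (Nat.cast : ℕ → ℚ) hmul
    have h3 : (q : ℚ) * (properCount F q : ℚ) = ((q : ℚ) - 1) * (properCount F' q : ℚ) := by
      linear_combination (q : ℚ) * hA + hB
    rw [pow_succ, pow_succ]
    linear_combination ((q : ℚ) ^ E) * h3 + (((q : ℚ) - 1)) * ih'


lemma card_le_cc_add_edges (F : SimpleGraph V) :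
    Fintype.card V ≤ Nat.card F.ConnectedComponent + Nat.card F.edgeSet := by
  classical
  set root : V → V := fun v => (F.connectedComponentMk v).out with hroot_def
  have hroot : ∀ v, F.Reachable v (root v) := by
    intro v
    have : F.connectedComponentMk (root v) = F.connectedComponentMk v :=
      (F.connectedComponentMk v).out_eq
    exact (SimpleGraph.ConnectedComponent.eq.mp this).symm
  have hrooteq : ∀ a b : V, F.connectedComponentMk a = F.connectedComponentMk b →
      root a = root b := by
    intro a b h
    simp only [hroot_def, h]
  have Hgen : ∀ v r : V, F.Reachable v r → v ≠ r →
      ∃ u, F.Adj v u ∧ F.dist u r < F.dist v r := by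
    intro v r hr hv
    have hd : F.dist v r ≠ 0 := fun h => hv (hr.dist_eq_zero_iff.mp h)
    obtain ⟨w, hw⟩ := hr.exists_walk_length_eq_dist
    cases w with
    | nil => exact absurd rfl hv
    | cons h p =>
      refine ⟨_, h, ?_⟩
      have := SimpleGraph.dist_le p
      rw [SimpleGraph.Walk.length_cons] at hw
      omega
  have H : ∀ v : V, v ≠ root v →
      ∃ u, F.Adj v u ∧ F.dist u (root v) < F.dist v (root v) :=
    fun v hv => Hgen v (root v) (hroot v) hv
  have H2 : ∀ v : V, ∃ u : V,
      v ≠ root v → (F.Adj v u ∧ F.dist u (root v) < F.dist v (root v)) := by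
    intro v
    by_cases hv : v = root v
    · exact ⟨v, fun h => absurd hv h⟩
    · exact (H v hv).imp fun u hu _ => hu
  choose parent hparent using H2
  have hinj : Function.Injective (fun v : V =>
      if h : v = root v then (Sum.inl (F.connectedComponentMk v) :
          F.ConnectedComponent ⊕ F.edgeSet)
      else Sum.inr ⟨s(v, parent v), (SimpleGraph.mem_edgeSet F).mpr (hparent v h).1⟩) := by
    intro a b hab
    dsimp only at hab
    by_cases ha : a = root a <;> by_cases hb : b = root b
    · rw [dif_pos ha, dif_pos hb, Sum.inl.injEq] at hab
      rw [ha, hb, hrooteq a b hab]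
    · rw [dif_pos ha, dif_neg hb] at hab
      exact absurd hab (by simp)
    · rw [dif_neg ha, dif_pos hb] at hab
      exact absurd hab (by simp)
    · rw [dif_neg ha, dif_neg hb, Sum.inr.injEq, Subtype.ext_iff] at hab
      simp only [Sym2.eq, Sym2.rel_iff', Prod.mk.injEq, Prod.swap_prod_mk] at hab
      rcases hab with ⟨h1, h2⟩ | ⟨h1, h2⟩
      · exact h1
      · exfalso
        have hadj : F.Adj a b := h2 ▸ (hparent a ha).1
        have hcomp : F.connectedComponentMk a = F.connectedComponentMk b :=
          SimpleGraph.ConnectedComponent.eq.mpr hadj.reachable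
        have hre := hrooteq a b hcomp
        have d1 := (hparent a ha).2
        have d2 := (hparent b hb).2
        rw [h2] at d1
        rw [← h1, ← hre] at d2
        omega
  have : Nat.card V ≤ Nat.card (F.ConnectedComponent ⊕ F.edgeSet) :=
    Nat.card_le_card_of_injective _ hinj
  rwa [Nat.card_sum, Nat.card_eq_fintype_card] at this


lemma prod_map_pow_sum (x : ℚ) (s : Multiset ℕ) :
    (s.map fun k => x ^ k).prod = x ^ s.sum := by
  induction s using Multiset.induction_on with
  | empty => simp
  | cons a s ih => simp [ih, pow_add]


end Aux

/-- For a forest `F`, the sum of star-basis coefficients of `X_F` over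
all partitions with exactly `m` parts vanishes whenever `m > cc(F)`. -/
theorem sum_of_coefficients_of_long_partitions_eq_zero
    {V : Type} [Fintype V] (F : SimpleGraph V) (hF : F.IsAcyclic)
    (c : Nat.Partition (Fintype.card V) → ℚ)
    (hc : csf F = ∑ p : Nat.Partition (Fintype.card V), c p • stPart p)
    (m : ℕ) (hm : Nat.card F.ConnectedComponent < m) :
    ∑ p ∈ Finset.univ.filter
        (fun p : Nat.Partition (Fintype.card V) => Multiset.card p.parts = m),
      c p = 0 := by
  classical
  set E := Nat.card F.edgeSet with hEdef
  have hkey : ∀ Q : ℕ,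
      (∑ p : Nat.Partition (Fintype.card V), c p * (((Q:ℚ)+2)/((Q:ℚ)+1)) ^ (Multiset.card p.parts + E))
        = (((Q:ℚ)+2)/((Q:ℚ)+1)) ^ (Fintype.card V) := by
    intro Q
    set q : ℕ := Q + 2 with hqdef
    have hden : ((Q:ℚ)+1) ≠ 0 := by positivity
    generalize hT : ((Q:ℚ)+2)/((Q:ℚ)+1) = t
    have ht : t * ((Q:ℚ)+1) = (Q:ℚ)+2 := by rw [← hT]; exact div_mul_cancel₀ _ hden
    have hqcast : ((q:ℕ):ℚ) = (Q:ℚ)+2 := by rw [hqdef]; push_cast; ring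
    have hA : (properCount F q : ℚ) =
        ∑ p : Nat.Partition (Fintype.card V), c p *
          (p.parts.map fun k => (properCount (starGraph k) q : ℚ)).prod := by
      have h0 := congrArg (phi q (Fintype.card V)) hc
      rw [phi_csf F q] at h0
      rw [h0]
      unfold phi
      simp_rw [map_sum, LinearMap.map_smul, smul_eq_mul]
      rw [Finset.sum_comm]
      refine Finset.sum_congr rfl fun p _ => ?_
      rw [← Finset.mul_sum]
      congr 1
      exact phi_stPart q p
    have hB : ∀ p : Nat.Partition (Fintype.card V),
        (p.parts.map fun k => (properCount (starGraph k) q : ℚ)).prod =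
          t ^ (Multiset.card p.parts) * ((Q:ℚ)+1) ^ (Fintype.card V) := by
      intro p
      have hper : ∀ k ∈ p.parts, ((properCount (starGraph k) q : ℚ)) = t * ((Q:ℚ)+1) ^ k := by
        intro k hk
        obtain ⟨k', rfl⟩ : ∃ k', k = k' + 1 := ⟨k - 1, by have := p.parts_pos hk; omega⟩
        rw [properCount_star]
        have hq1' : q - 1 = Q + 1 := by omega
        rw [hq1']
        push_cast
        rw [pow_succ]
        linear_combination (-(((Q:ℚ)+1) ^ k')) * ht + (((Q:ℚ)+1) ^ k') * hqcast
      rw [Multiset.map_congr rfl hper, Multiset.prod_map_mul, Multiset.map_const',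
        Multiset.prod_replicate, prod_map_pow_sum, p.parts_sum]
    have hC := properCount_forest E F hF hEdef.symm q
    rw [hqcast] at hC
    have h21 : ((Q:ℚ)+2) - 1 = (Q:ℚ)+1 := by ring
    rw [h21] at hC
    have hsum : (properCount F q : ℚ) =
        ∑ p : Nat.Partition (Fintype.card V), c p * (t ^ (Multiset.card p.parts) * ((Q:ℚ)+1) ^ (Fintype.card V)) := by
      rw [hA]
      exact Finset.sum_congr rfl fun p _ => by rw [hB]
    have hpowE : t ^ E * ((Q:ℚ)+1) ^ E = ((Q:ℚ)+2) ^ E := by rw [← mul_pow, ht]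
    have hpown : t ^ (Fintype.card V) * ((Q:ℚ)+1) ^ (Fintype.card V) = ((Q:ℚ)+2) ^ (Fintype.card V) := by
      rw [← mul_pow, ht]
    have hcancel : (((Q:ℚ)+1)) ^ (Fintype.card V + E) ≠ 0 := pow_ne_zero _ hden
    apply mul_right_cancel₀ hcancel
    calc (∑ p : Nat.Partition (Fintype.card V), c p * t ^ (Multiset.card p.parts + E)) * ((Q:ℚ)+1) ^ (Fintype.card V + E)
        = ∑ p : Nat.Partition (Fintype.card V),
            c p * (t ^ (Multiset.card p.parts) * ((Q:ℚ)+1) ^ (Fintype.card V)) * (t ^ E * ((Q:ℚ)+1) ^ E) := by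
          rw [Finset.sum_mul]
          refine Finset.sum_congr rfl fun p _ => by ring
      _ = (∑ p : Nat.Partition (Fintype.card V), c p * (t ^ (Multiset.card p.parts) * ((Q:ℚ)+1) ^ (Fintype.card V))) *
            ((Q:ℚ)+2) ^ E := by
          simp only [hpowE]
          rw [← Finset.sum_mul]
      _ = (properCount F q : ℚ) * ((Q:ℚ)+2) ^ E := by rw [← hsum]
      _ = ((Q:ℚ)+2) ^ (Fintype.card V) * ((Q:ℚ)+1) ^ E := hC
      _ = t ^ (Fintype.card V) * ((Q:ℚ)+1) ^ (Fintype.card V + E) := by rw [← hpown]; ring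
  set P : Polynomial ℚ :=
    (∑ p : Nat.Partition (Fintype.card V), Polynomial.C (c p) * Polynomial.X ^ (Multiset.card p.parts + E))
      - Polynomial.X ^ (Fintype.card V) with hP
  have hroot : ∀ Q : ℕ, P.IsRoot (((Q:ℚ)+2)/((Q:ℚ)+1)) := by
    intro Q
    have hk := hkey Q
    simp only [Polynomial.IsRoot, hP, Polynomial.eval_sub, Polynomial.eval_finset_sum,
      Polynomial.eval_mul, Polynomial.eval_C, Polynomial.eval_pow, Polynomial.eval_X]
    rw [sub_eq_zero]
    exact hk
  have hinj : Function.Injective (fun Q : ℕ => ((Q:ℚ)+2)/((Q:ℚ)+1)) := by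
    intro a b hab
    have hda : ((a:ℚ)+1) ≠ 0 := by positivity
    have hdb : ((b:ℚ)+1) ≠ 0 := by positivity
    field_simp at hab
    have : (a:ℚ) = (b:ℚ) := by nlinarith [hab]
    exact_mod_cast this
  have hPzero : P = 0 := Polynomial.eq_zero_of_infinite_isRoot P
    (Set.infinite_of_injective_forall_mem hinj (fun Q => hroot Q))
  have hcoeff := congrArg (fun f : Polynomial ℚ => Polynomial.coeff f (m + E)) hPzero
  simp only [hP, Polynomial.coeff_sub, Polynomial.finset_sum_coeff,
    Polynomial.coeff_C_mul_X_pow, Polynomial.coeff_X_pow, Polynomial.coeff_zero] at hcoeff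
  have hmn : ¬ (m + E = Fintype.card V) := by
    have h5 := card_le_cc_add_edges F
    omega
  rw [if_neg hmn, sub_zero] at hcoeff
  rw [Finset.sum_filter]
  have hconv : (∑ p : Nat.Partition (Fintype.card V),
        if Multiset.card p.parts = m then c p else 0) =
      (∑ p : Nat.Partition (Fintype.card V),
        if m + E = Multiset.card p.parts + E then c p else 0) := by
    refine Finset.sum_congr rfl fun p _ => ?_
    by_cases h : Multiset.card p.parts = m
    · rw [if_pos h, if_pos (by omega)]
    · rw [if_neg h, if_neg (by omega)]
  rw [hconv]
  exact hcoeff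


end

end CSFPaper
end

section
/- Let F be a forest and e = uv an internal edge of F. Let κ_i and κ_j be the orders of the leaf components of F containing u and v, respectively. Then λ_LC((F⊙e) ∖ ℓ_e) is obtained from λ_LC(F) by removing the parts κ_i and κ_j and inserting the parts κ_i + κ_j − 1 and 1 (then sorting into nonincreasing order). -/
open scoped Classical

namespace CSFPaper

noncomputable section

variable {V : Type*}

/-! ### Auxiliary lemmas for the dot-contraction lemma -/

section DotAux

variable {W : Type} [Fintype W]

lemma mem_internalEdges_iff (G : SimpleGraph W) {a b : W} :
    s(a, b) ∈ internalEdges G ↔ G.Adj a b ∧ 2 ≤ G.degree a ∧ 2 ≤ G.degree b := by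
  simp only [internalEdges, Set.mem_setOf_eq, SimpleGraph.mem_edgeSet]
  constructor
  · rintro ⟨h1, h2⟩
    exact ⟨h1, h2 a (by simp), h2 b (by simp)⟩
  · rintro ⟨h1, h2, h3⟩
    refine ⟨h1, ?_⟩
    intro x hx
    rcases Sym2.mem_iff.mp hx with rfl | rfl
    · exact h2
    · exact h3

lemma lcGraph_adj (G : SimpleGraph W) {a b : W} :
    (lcGraph G).Adj a b ↔ G.Adj a b ∧ (G.degree a ≤ 1 ∨ G.degree b ≤ 1) := by
  unfold lcGraph
  rw [SimpleGraph.deleteEdges_adj, mem_internalEdges_iff]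
  constructor
  · rintro ⟨h1, h2⟩
    refine ⟨h1, ?_⟩
    by_contra hc
    push_neg at hc
    exact h2 ⟨h1, by omega, by omega⟩
  · rintro ⟨h1, h2⟩
    refine ⟨h1, ?_⟩
    rintro ⟨-, h3, h4⟩
    omega

lemma closed_of_walk {G : SimpleGraph W} {S : Set W}
    (hS : ∀ a b, a ∈ S → G.Adj a b → b ∈ S) :
    ∀ {x y : W} (_ : G.Walk x y), x ∈ S → y ∈ S := by
  intro x y p
  induction p with
  | nil => exact id
  | cons h p ih => exact fun hx => ih (hS _ _ hx h)

lemma supp_of_internal (G : SimpleGraph W) {w : W} (hw : 2 ≤ G.degree w) :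
    ((lcGraph G).connectedComponentMk w).supp
      = insert w {x | G.Adj w x ∧ G.degree x ≤ 1} := by
  ext x
  rw [SimpleGraph.ConnectedComponent.mem_supp_iff, SimpleGraph.ConnectedComponent.eq]
  constructor
  · intro hr
    obtain ⟨p⟩ := hr.symm
    refine closed_of_walk ?_ p (Set.mem_insert _ _)
    intro a b ha hab
    rw [lcGraph_adj] at hab
    rcases Set.mem_insert_iff.mp ha with rfl | ⟨haw, hdeg⟩
    · refine Set.mem_insert_iff.mpr (Or.inr ⟨hab.1, ?_⟩)
      rcases hab.2 with h | h
      · omega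
      · exact h
    · have hb : b = w := by
        have h1 : w ∈ G.neighborFinset a := by
          simpa [SimpleGraph.mem_neighborFinset] using haw.symm
        have h2 : b ∈ G.neighborFinset a := by
          simpa [SimpleGraph.mem_neighborFinset] using hab.1
        exact Finset.card_le_one.mp hdeg b h2 w h1
      exact Set.mem_insert_iff.mpr (Or.inl hb)
  · intro hx
    rcases Set.mem_insert_iff.mp hx with rfl | ⟨hadj, hdeg⟩
    · exact SimpleGraph.Reachable.refl _
    · exact ((lcGraph_adj G).mpr ⟨hadj, Or.inr hdeg⟩).reachable.symm

lemma supp_of_isolated (G : SimpleGraph W) {w : W} (hw : ∀ x, ¬ G.Adj w x) :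
    (G.connectedComponentMk w).supp = {w} := by
  ext x
  rw [SimpleGraph.ConnectedComponent.mem_supp_iff, SimpleGraph.ConnectedComponent.eq]
  constructor
  · intro hr
    obtain ⟨p⟩ := hr.symm
    have := closed_of_walk (S := {w}) ?_ p rfl
    · exact this.symm ▸ this
    · intro a b ha hab
      rcases ha with rfl
      exact absurd hab (hw b)
  · rintro rfl
    exact SimpleGraph.Reachable.refl _

lemma no_common_neighbor {F : SimpleGraph W} (hF : F.IsAcyclic) {u v w : W}
    (huv : F.Adj u v) (h1 : F.Adj u w) (h2 : F.Adj v w) : False := by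
  have hpu := SimpleGraph.isAcyclic_iff_path_unique.mp hF
  have hp1 : (SimpleGraph.Walk.cons h1 SimpleGraph.Walk.nil).IsPath := by
    simp [h1.ne]
  have hp2 : (SimpleGraph.Walk.cons huv (SimpleGraph.Walk.cons h2 SimpleGraph.Walk.nil)).IsPath := by
    simp [huv.ne, h1.ne, h2.ne]
  have := hpu ⟨_, hp1⟩ ⟨_, hp2⟩
  have hlen := congrArg (fun p : F.Path u w => p.1.length) this
  simp [SimpleGraph.Walk.length_cons] at hlen

lemma dotContract_adj (F : SimpleGraph W) (u v a b : W) :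
    (dotContract F u v).Adj a b ↔ a ≠ b ∧ a ≠ v ∧ b ≠ v ∧
      (F.Adj a b ∨ (a = u ∧ F.Adj v b) ∨ (b = u ∧ F.Adj a v)) := Iff.rfl

section Degrees

variable {W : Type} [Fintype W] {F : SimpleGraph W} (hF : F.IsAcyclic) {u v : W}
  (huv : F.Adj u v)

include hF huv in
lemma dotContract_degree_eq {w : W} (hwu : w ≠ u) (hwv : w ≠ v) :
    (dotContract F u v).degree w = F.degree w := by
  by_cases hvw : F.Adj v w
  · have huw : ¬ F.Adj u w := fun h => no_common_neighbor hF huv h hvw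
    have hkey : (dotContract F u v).neighborFinset w
        = insert u ((F.neighborFinset w).erase v) := by
      ext x
      simp only [SimpleGraph.mem_neighborFinset, Finset.mem_insert, Finset.mem_erase,
        dotContract_adj]
      constructor
      · rintro ⟨hwx, -, hxv, h | ⟨rfl, h⟩ | ⟨rfl, h⟩⟩
        · exact Or.inr ⟨hxv, h⟩
        · exact absurd rfl hwu
        · exact Or.inl rfl
      · rintro (rfl | ⟨hxv, hwx⟩)
        · exact ⟨hwu, hwv, huv.ne, Or.inr (Or.inr ⟨rfl, hvw.symm⟩)⟩
        · exact ⟨hwx.ne, hwv, hxv, Or.inl hwx⟩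
    have hvmem : v ∈ F.neighborFinset w := by
      simpa [SimpleGraph.mem_neighborFinset] using hvw.symm
    have humem : u ∉ (F.neighborFinset w).erase v := by
      simp only [Finset.mem_erase, SimpleGraph.mem_neighborFinset]
      exact fun h => huw h.2.symm
    have h1 : 0 < (F.neighborFinset w).card := Finset.card_pos.mpr ⟨v, hvmem⟩
    show ((dotContract F u v).neighborFinset w).card = (F.neighborFinset w).card
    rw [hkey, Finset.card_insert_of_notMem humem, Finset.card_erase_of_mem hvmem]
    omega
  · have hkey : (dotContract F u v).neighborFinset w = F.neighborFinset w := by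
      ext x
      simp only [SimpleGraph.mem_neighborFinset, dotContract_adj]
      constructor
      · rintro ⟨hwx, -, hxv, h | ⟨rfl, h⟩ | ⟨rfl, h⟩⟩
        · exact h
        · exact absurd rfl hwu
        · exact absurd h.symm hvw
      · intro h
        have hxv : x ≠ v := fun hx => hvw (hx ▸ h).symm
        exact ⟨h.ne, hwv, hxv, Or.inl h⟩
    show ((dotContract F u v).neighborFinset w).card = (F.neighborFinset w).card
    rw [hkey]

include hF huv in
lemma dotContract_degree_u (hu : 2 ≤ F.degree u) (hv : 2 ≤ F.degree v) :
    2 ≤ (dotContract F u v).degree u := by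
  have hu' : 1 < (F.neighborFinset u).card := hu
  have hv' : 1 < (F.neighborFinset v).card := hv
  obtain ⟨a, ha, hav⟩ := Finset.exists_mem_ne hu' v
  obtain ⟨b, hb, hbu⟩ := Finset.exists_mem_ne hv' u
  rw [SimpleGraph.mem_neighborFinset] at ha hb
  have hab : a ≠ b := fun h => no_common_neighbor hF huv ha (h ▸ hb)
  have hDa : (dotContract F u v).Adj u a :=
    ⟨ha.ne, huv.ne, hav, Or.inl ha⟩
  have hDb : (dotContract F u v).Adj u b :=
    ⟨hbu.symm, huv.ne, hb.ne', Or.inr (Or.inl ⟨rfl, hb⟩)⟩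
  have hsub : ({a, b} : Finset W) ⊆ (dotContract F u v).neighborFinset u := by
    intro x hx
    rcases Finset.mem_insert.mp hx with rfl | hx
    · simpa [SimpleGraph.mem_neighborFinset] using hDa
    · rcases Finset.mem_singleton.mp hx with rfl
      simpa [SimpleGraph.mem_neighborFinset] using hDb
  calc 2 = ({a, b} : Finset W).card := (Finset.card_pair hab).symm
    _ ≤ _ := Finset.card_le_card hsub

lemma dotContract_not_adj_v (x : W) : ¬ (dotContract F u v).Adj v x :=
  fun h => h.2.1 rfl

include hF huv in
lemma dotContract_leafNbrs (hu : 2 ≤ F.degree u) (hv : 2 ≤ F.degree v) :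
    {x | (dotContract F u v).Adj u x ∧ (dotContract F u v).degree x ≤ 1}
      = {x | F.Adj u x ∧ F.degree x ≤ 1} ∪ {x | F.Adj v x ∧ F.degree x ≤ 1} := by
  ext x
  simp only [Set.mem_setOf_eq, Set.mem_union]
  constructor
  · rintro ⟨⟨hux, -, hxv, h | ⟨-, h⟩ | ⟨rfl, h⟩⟩, hdeg⟩
    · exact Or.inl ⟨h, by rwa [dotContract_degree_eq hF huv (Ne.symm hux) hxv] at hdeg⟩
    · exact Or.inr ⟨h, by rwa [dotContract_degree_eq hF huv (Ne.symm hux) hxv] at hdeg⟩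
    · exact absurd rfl hux
  · rintro (⟨h, hd⟩ | ⟨h, hd⟩)
    · have hxv : x ≠ v := fun hx => by rw [hx] at hd; omega
      have hxu : x ≠ u := h.ne'
      exact ⟨⟨h.ne, huv.ne, hxv, Or.inl h⟩,
        by rwa [dotContract_degree_eq hF huv hxu hxv]⟩
    · have hxu : x ≠ u := fun hx => by rw [hx] at hd; omega
      exact ⟨⟨Ne.symm hxu, huv.ne, h.ne', Or.inr (Or.inl ⟨rfl, h⟩)⟩,
        by rwa [dotContract_degree_eq hF huv hxu h.ne']⟩

end Degrees

end DotAux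

/-- **Dot-contraction Lemma.** The leaf component partition of the
dot-contraction of a forest along an internal edge `e = uv`: the orders `κ_i`, `κ_j` of
the leaf components containing `u` and `v` are replaced by `κ_i + κ_j - 1` and `1`. -/
theorem dot_contraction_lemma
    {V : Type} [Fintype V] (F : SimpleGraph V) (hF : F.IsAcyclic)
    (u v : V) (he : s(u, v) ∈ internalEdges F) :
    lcMultiset (dotContract F u v) =
      (leafCompOrder F u + leafCompOrder F v - 1) ::ₘ 1 ::ₘ
        (((lcMultiset F).erase (leafCompOrder F u)).erase (leafCompOrder F v)) := by
  classical
  obtain ⟨huv', hdeg2⟩ := he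
  have huv : F.Adj u v := F.mem_edgeSet.mp huv'
  have hu : 2 ≤ F.degree u := hdeg2 u (by simp)
  have hv : 2 ≤ F.degree v := hdeg2 v (by simp)
  set D := dotContract F u v with hD
  set L := lcGraph F with hLdef
  set L' := lcGraph D with hL'def
  set lu : Set V := {x | F.Adj u x ∧ F.degree x ≤ 1} with hlu
  set lv : Set V := {x | F.Adj v x ∧ F.degree x ≤ 1} with hlv
  -- basic membership facts
  have hulu : u ∉ lu := fun h => F.loopless.irrefl u h.1
  have hvlv : v ∉ lv := fun h => F.loopless.irrefl v h.1
  have hvlu : v ∉ lu := fun h => by have := h.2; omega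
  have hulv : u ∉ lv := fun h => by have := h.2; omega
  have hlu_ne_u : ∀ x ∈ lu, x ≠ u := fun x hx h => hulu (h ▸ hx)
  have hlu_ne_v : ∀ x ∈ lu, x ≠ v := fun x hx h => hvlu (h ▸ hx)
  have hlv_ne_u : ∀ x ∈ lv, x ≠ u := fun x hx h => hulv (h ▸ hx)
  have hlv_ne_v : ∀ x ∈ lv, x ≠ v := fun x hx h => hvlv (h ▸ hx)
  have hdisj : Disjoint lu lv := Set.disjoint_left.mpr
    (by intro x hx1 hx2; exact (no_common_neighbor hF huv hx1.1 hx2.1).elim)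
  -- supp computations
  have hSu : (L.connectedComponentMk u).supp = insert u lu := supp_of_internal F hu
  have hSv : (L.connectedComponentMk v).supp = insert v lv := supp_of_internal F hv
  have hSu' : (L'.connectedComponentMk u).supp = insert u (lu ∪ lv) := by
    rw [hL'def, supp_of_internal D (dotContract_degree_u hF huv hu hv),
      dotContract_leafNbrs hF huv hu hv]
  have hSv' : (L'.connectedComponentMk v).supp = {v} :=
    supp_of_isolated L' (fun x h => dotContract_not_adj_v x ((lcGraph_adj D).mp h).1)
  -- distinctness of components
  have hCuv : L.connectedComponentMk u ≠ L.connectedComponentMk v := by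
    intro h
    have hm : v ∈ (L.connectedComponentMk u).supp := by
      rw [SimpleGraph.ConnectedComponent.mem_supp_iff]; exact h.symm
    rw [hSu] at hm
    rcases Set.mem_insert_iff.mp hm with h' | h'
    · exact huv.ne' h'
    · exact hvlu h'
  have hCuv' : L'.connectedComponentMk u ≠ L'.connectedComponentMk v := by
    intro h
    have hm : u ∈ (L'.connectedComponentMk v).supp := by
      rw [SimpleGraph.ConnectedComponent.mem_supp_iff]; exact h
    rw [hSv'] at hm
    exact huv.ne hm
  -- the set T
  set T : Set V := insert u (insert v (lu ∪ lv)) with hT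
  have hnotT : ∀ {a}, a ∉ T → a ≠ u ∧ a ≠ v ∧ a ∉ lu ∧ a ∉ lv := by
    intro a ha
    simp only [hT, Set.mem_insert_iff, Set.mem_union, not_or] at ha
    exact ⟨ha.1, ha.2.1, ha.2.2.1, ha.2.2.2⟩
  have hTsupp : T = (L.connectedComponentMk u).supp ∪ (L.connectedComponentMk v).supp := by
    rw [hSu, hSv]
    ext x
    simp only [hT, Set.mem_insert_iff, Set.mem_union]
    tauto
  have hTsupp' : T = (L'.connectedComponentMk u).supp ∪ (L'.connectedComponentMk v).supp := by
    rw [hSu', hSv']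
    ext x
    simp only [hT, Set.mem_insert_iff, Set.mem_union, Set.mem_singleton_iff]
    tauto
  have hT_L : ∀ a b : V, L.Adj a b → (a ∈ T ↔ b ∈ T) := by
    intro a b hab
    have hmk := SimpleGraph.ConnectedComponent.connectedComponentMk_eq_of_adj hab
    rw [hTsupp]
    simp only [Set.mem_union, SimpleGraph.ConnectedComponent.mem_supp_iff, hmk]
  have hT_L' : ∀ a b : V, L'.Adj a b → (a ∈ T ↔ b ∈ T) := by
    intro a b hab
    have hmk := SimpleGraph.ConnectedComponent.connectedComponentMk_eq_of_adj hab
    rw [hTsupp']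
    simp only [Set.mem_union, SimpleGraph.ConnectedComponent.mem_supp_iff, hmk]
  -- adjacency agreement outside T
  have hagree : ∀ a b : V, a ∉ T → (L.Adj a b ↔ L'.Adj a b) := by
    intro a b haT
    obtain ⟨hau, hav, -, -⟩ := hnotT haT
    constructor
    · intro hab
      have hbT : b ∉ T := fun hb => haT ((hT_L a b hab).mpr hb)
      obtain ⟨hbu, hbv, -, -⟩ := hnotT hbT
      rw [hLdef, lcGraph_adj] at hab
      rw [hL'def, lcGraph_adj]
      refine ⟨⟨hab.1.ne, hav, hbv, Or.inl hab.1⟩, ?_⟩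
      rw [dotContract_degree_eq hF huv hau hav, dotContract_degree_eq hF huv hbu hbv]
      exact hab.2
    · intro hab
      have hbT : b ∉ T := fun hb => haT ((hT_L' a b hab).mpr hb)
      obtain ⟨hbu, hbv, -, -⟩ := hnotT hbT
      rw [hL'def, lcGraph_adj] at hab
      rw [hLdef, lcGraph_adj]
      obtain ⟨⟨hne, -, -, hor⟩, hdeg⟩ := hab
      have hFab : F.Adj a b := by
        rcases hor with h | ⟨h, -⟩ | ⟨h, -⟩
        · exact h
        · exact absurd h hau
        · exact absurd h hbu
      refine ⟨hFab, ?_⟩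
      rwa [dotContract_degree_eq hF huv hau hav,
        dotContract_degree_eq hF huv hbu hbv] at hdeg
  -- reachability agreement outside T
  have hreach : ∀ a : V, a ∉ T → ∀ x : V, (L.Reachable a x ↔ L'.Reachable a x) := by
    intro a haT x
    constructor
    · intro h
      obtain ⟨p⟩ := h
      have key := closed_of_walk (G := L) (S := {y | L'.Reachable a y ∧ y ∉ T}) ?_ p
        ⟨SimpleGraph.Reachable.refl a, haT⟩
      · exact key.1
      · rintro c d ⟨hcr, hcT⟩ hcd
        exact ⟨hcr.trans ((hagree c d hcT).mp hcd).reachable,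
          fun hd => hcT ((hT_L c d hcd).mpr hd)⟩
    · intro h
      obtain ⟨p⟩ := h
      have key := closed_of_walk (G := L') (S := {y | L.Reachable a y ∧ y ∉ T}) ?_ p
        ⟨SimpleGraph.Reachable.refl a, haT⟩
      · exact key.1
      · rintro c d ⟨hcr, hcT⟩ hcd
        exact ⟨hcr.trans ((hagree c d hcT).mpr hcd).reachable,
          fun hd => hcT ((hT_L' c d hcd).mpr hd)⟩
  -- edges inside the new big leaf component
  have hlu_adj' : ∀ x ∈ lu ∪ lv, L'.Adj u x := by
    intro x hx
    rw [hL'def, lcGraph_adj]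
    rcases hx with hx | hx
    · have hxu := hlu_ne_u x hx
      have hxv := hlu_ne_v x hx
      refine ⟨⟨hx.1.ne, huv.ne, hxv, Or.inl hx.1⟩, Or.inr ?_⟩
      rw [dotContract_degree_eq hF huv hxu hxv]
      exact hx.2
    · have hxu := hlv_ne_u x hx
      have hxv := hlv_ne_v x hx
      refine ⟨⟨Ne.symm hxu, huv.ne, hxv, Or.inr (Or.inl ⟨rfl, hx.1⟩)⟩, Or.inr ?_⟩
      rw [dotContract_degree_eq hF huv hxu hxv]
      exact hx.2
  have hlu_adjF : ∀ x ∈ lu, L.Adj u x := by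
    intro x hx
    rw [hLdef, lcGraph_adj]
    exact ⟨hx.1, Or.inr hx.2⟩
  -- Svset, the support of v's component in L
  set Svset : Set V := insert v lv with hSvset
  have hSvsubT : Svset ⊆ T := by
    intro x hx
    rcases Set.mem_insert_iff.mp hx with rfl | hx
    · exact Set.mem_insert_iff.mpr (Or.inr (Set.mem_insert _ _))
    · exact Set.mem_insert_iff.mpr (Or.inr (Set.mem_insert_iff.mpr (Or.inr (Or.inr hx))))
  have hSvsupp : (L.connectedComponentMk v).supp = Svset := hSv
  -- the forward map
  have hgadj : ∀ a b : V, L.Adj a b →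
      (if a ∈ Svset then L'.connectedComponentMk v else L'.connectedComponentMk a)
        = (if b ∈ Svset then L'.connectedComponentMk v else L'.connectedComponentMk b) := by
    intro a b hab
    have hmk := SimpleGraph.ConnectedComponent.connectedComponentMk_eq_of_adj hab
    by_cases ha : a ∈ Svset
    · have hb : b ∈ Svset := by
        rw [← hSvsupp] at ha ⊢
        rw [SimpleGraph.ConnectedComponent.mem_supp_iff] at ha ⊢
        rw [← hmk]; exact ha
      rw [if_pos ha, if_pos hb]
    · have hb : b ∉ Svset := by
        intro hb
        apply ha
        rw [← hSvsupp] at hb ⊢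
        rw [SimpleGraph.ConnectedComponent.mem_supp_iff] at hb ⊢
        rw [hmk]; exact hb
      rw [if_neg ha, if_neg hb]
      by_cases ha2 : a ∈ (L.connectedComponentMk u).supp
      · have hb2 : b ∈ (L.connectedComponentMk u).supp := by
          rw [SimpleGraph.ConnectedComponent.mem_supp_iff] at ha2 ⊢
          rw [← hmk]; exact ha2
        have key : ∀ x ∈ (L.connectedComponentMk u).supp,
            L'.connectedComponentMk x = L'.connectedComponentMk u := by
          intro x hx
          rw [hSu] at hx
          rcases Set.mem_insert_iff.mp hx with rfl | hx
          · rfl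
          · exact (SimpleGraph.ConnectedComponent.connectedComponentMk_eq_of_adj
              (hlu_adj' x (Or.inl hx))).symm
        rw [key a ha2, key b hb2]
      · have haT : a ∉ T := by
          rw [hTsupp]
          intro hx
          rcases hx with hx | hx
          · exact ha2 hx
          · exact ha (hSvsupp ▸ hx)
        exact SimpleGraph.ConnectedComponent.connectedComponentMk_eq_of_adj
          ((hagree a b haT).mp hab)
  have hgwalk : ∀ (a b : V) (_ : L.Walk a b),
      (if a ∈ Svset then L'.connectedComponentMk v else L'.connectedComponentMk a)
        = (if b ∈ Svset then L'.connectedComponentMk v else L'.connectedComponentMk b) := by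
    intro a b p
    induction p with
    | nil => rfl
    | cons h q ih => exact (hgadj _ _ h).trans ih
  -- the backward map
  have hg'adj : ∀ a b : V, L'.Adj a b →
      (if a ∈ lv then L.connectedComponentMk u else L.connectedComponentMk a)
        = (if b ∈ lv then L.connectedComponentMk u else L.connectedComponentMk b) := by
    intro a b hab
    have hmk := SimpleGraph.ConnectedComponent.connectedComponentMk_eq_of_adj hab
    have hav : a ≠ v := by
      intro h
      exact dotContract_not_adj_v b ((lcGraph_adj D).mp (h ▸ hab)).1
    have hbv : b ≠ v := by
      intro h
      exact dotContract_not_adj_v a ((lcGraph_adj D).mp (h ▸ hab.symm)).1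
    have key : ∀ x ∈ (L'.connectedComponentMk u).supp,
        (if x ∈ lv then L.connectedComponentMk u else L.connectedComponentMk x)
          = L.connectedComponentMk u := by
      intro x hx
      by_cases hxlv : x ∈ lv
      · rw [if_pos hxlv]
      · rw [if_neg hxlv]
        rw [hSu'] at hx
        rcases Set.mem_insert_iff.mp hx with rfl | hx
        · rfl
        · rcases hx with hx | hx
          · exact (SimpleGraph.ConnectedComponent.connectedComponentMk_eq_of_adj
              (hlu_adjF x hx)).symm
          · exact absurd hx hxlv
    by_cases ha2 : a ∈ (L'.connectedComponentMk u).supp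
    · have hb2 : b ∈ (L'.connectedComponentMk u).supp := by
        rw [SimpleGraph.ConnectedComponent.mem_supp_iff] at ha2 ⊢
        rw [← hmk]; exact ha2
      rw [key a ha2, key b hb2]
    · have haT : a ∉ T := by
        rw [hTsupp']
        intro hx
        rcases hx with hx | hx
        · exact ha2 hx
        · rw [hSv'] at hx
          exact hav hx
      have hbT : b ∉ T := fun hb => haT ((hT_L' a b hab).mpr hb)
      obtain ⟨-, -, -, halv⟩ := hnotT haT
      obtain ⟨-, -, -, hblv⟩ := hnotT hbT
      rw [if_neg halv, if_neg hblv]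
      exact SimpleGraph.ConnectedComponent.connectedComponentMk_eq_of_adj
        ((hagree a b haT).mpr hab)
  have hg'walk : ∀ (a b : V) (_ : L'.Walk a b),
      (if a ∈ lv then L.connectedComponentMk u else L.connectedComponentMk a)
        = (if b ∈ lv then L.connectedComponentMk u else L.connectedComponentMk b) := by
    intro a b p
    induction p with
    | nil => rfl
    | cons h q ih => exact (hg'adj _ _ h).trans ih
  -- the equivalence of connected components
  let ψ : L.ConnectedComponent → L'.ConnectedComponent :=
    SimpleGraph.ConnectedComponent.lift
      (fun w => if w ∈ Svset then L'.connectedComponentMk v else L'.connectedComponentMk w)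
      (fun a b p _ => hgwalk a b p)
  let ψ' : L'.ConnectedComponent → L.ConnectedComponent :=
    SimpleGraph.ConnectedComponent.lift
      (fun w => if w ∈ lv then L.connectedComponentMk u else L.connectedComponentMk w)
      (fun a b p _ => hg'walk a b p)
  have hψmk : ∀ w : V, ψ (L.connectedComponentMk w)
      = if w ∈ Svset then L'.connectedComponentMk v else L'.connectedComponentMk w := fun _ => rfl
  have hψ'mk : ∀ w : V, ψ' (L'.connectedComponentMk w)
      = if w ∈ lv then L.connectedComponentMk u else L.connectedComponentMk w := fun _ => rfl
  have hleft : Function.LeftInverse ψ' ψ := by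
    intro C
    refine SimpleGraph.ConnectedComponent.ind (fun w => ?_) C
    rw [hψmk]
    by_cases hw : w ∈ Svset
    · rw [if_pos hw, hψ'mk, if_neg hvlv]
      rw [← hSvsupp] at hw
      rw [SimpleGraph.ConnectedComponent.mem_supp_iff] at hw
      exact hw.symm
    · rw [if_neg hw, hψ'mk, if_neg (fun hwlv => hw (Set.mem_insert_iff.mpr (Or.inr hwlv)))]
  have hright : Function.RightInverse ψ' ψ := by
    intro C
    refine SimpleGraph.ConnectedComponent.ind (fun w => ?_) C
    rw [hψ'mk]
    by_cases hw : w ∈ lv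
    · rw [if_pos hw, hψmk, if_neg (fun h => hulv (by
        rcases Set.mem_insert_iff.mp h with h' | h'
        · exact absurd h' huv.ne
        · exact absurd h' hulv))]
      exact SimpleGraph.ConnectedComponent.connectedComponentMk_eq_of_adj
        (hlu_adj' w (Or.inr hw))
    · rw [if_neg hw, hψmk]
      by_cases hw2 : w ∈ Svset
      · rcases Set.mem_insert_iff.mp hw2 with rfl | h'
        · rw [if_pos hw2]
        · exact absurd h' hw
      · rw [if_neg hw2]
  let ψe : L.ConnectedComponent ≃ L'.ConnectedComponent := ⟨ψ, ψ', hleft, hright⟩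
  -- multiset bookkeeping
  have hsurjL : Function.Surjective L.connectedComponentMk := fun C => C.exists_rep
  have hsurjL' : Function.Surjective L'.connectedComponentMk := fun C => C.exists_rep
  have hcompL : compSizes L
      = (Finset.univ.val : Multiset L.ConnectedComponent).map
          (fun C => Nat.card C.supp) := by
    unfold compSizes
    rw [Finset.image_univ_of_surjective hsurjL]
  have hcompL' : compSizes L'
      = (Finset.univ.val : Multiset L'.ConnectedComponent).map
          (fun C => Nat.card C.supp) := by
    unfold compSizes
    rw [Finset.image_univ_of_surjective hsurjL']
  have hunivmap : (Finset.univ.val : Multiset L'.ConnectedComponent)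
      = (Finset.univ.val : Multiset L.ConnectedComponent).map ψe := by
    have h1 := Finset.map_univ_equiv ψe
    have h2 := congrArg Finset.val h1
    rw [Finset.map_val] at h2
    exact h2.symm
  have hmemCu : L.connectedComponentMk u ∈ (Finset.univ.val : Multiset L.ConnectedComponent) :=
    Finset.mem_val.mpr (Finset.mem_univ _)
  have hmemCv : L.connectedComponentMk v
      ∈ (Finset.univ.val : Multiset L.ConnectedComponent).erase (L.connectedComponentMk u) :=
    (Multiset.mem_erase_of_ne hCuv.symm).mpr (Finset.mem_val.mpr (Finset.mem_univ _))
  set R : Multiset L.ConnectedComponent :=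
    ((Finset.univ.val : Multiset L.ConnectedComponent).erase
      (L.connectedComponentMk u)).erase (L.connectedComponentMk v) with hR
  have hsplit : (Finset.univ.val : Multiset L.ConnectedComponent)
      = L.connectedComponentMk u ::ₘ L.connectedComponentMk v ::ₘ R := by
    rw [hR, Multiset.cons_erase hmemCv, Multiset.cons_erase hmemCu]
  -- cardinality computations
  have hκu : leafCompOrder F u = Nat.card (L.connectedComponentMk u).supp := rfl
  have hκv : leafCompOrder F v = Nat.card (L.connectedComponentMk v).supp := rfl
  have hnu : Nat.card (L.connectedComponentMk u).supp = lu.ncard + 1 := by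
    rw [Nat.card_coe_set_eq, hSu, Set.ncard_insert_of_notMem hulu]
  have hnv : Nat.card (L.connectedComponentMk v).supp = lv.ncard + 1 := by
    rw [Nat.card_coe_set_eq, hSv, Set.ncard_insert_of_notMem hvlv]
  have hnu' : Nat.card (L'.connectedComponentMk u).supp = lu.ncard + lv.ncard + 1 := by
    rw [Nat.card_coe_set_eq, hSu',
      Set.ncard_insert_of_notMem (fun h => by
        rcases h with h | h
        · exact hulu h
        · exact hulv h),
      Set.ncard_union_eq hdisj]
  have hnv' : Nat.card (L'.connectedComponentMk v).supp = 1 := by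
    rw [Nat.card_coe_set_eq, hSv', Set.ncard_singleton]
  -- values of the three pieces
  have hψCu : ψe (L.connectedComponentMk u) = L'.connectedComponentMk u := by
    show ψ (L.connectedComponentMk u) = L'.connectedComponentMk u
    rw [hψmk, if_neg (fun h => by
      rcases Set.mem_insert_iff.mp h with h' | h'
      · exact huv.ne h'
      · exact hulv h')]
  have hψCv : ψe (L.connectedComponentMk v) = L'.connectedComponentMk v := by
    show ψ (L.connectedComponentMk v) = L'.connectedComponentMk v
    rw [hψmk, if_pos (Set.mem_insert _ _)]
  have hA : Nat.card (ψe (L.connectedComponentMk u)).supp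
      = Nat.card (L.connectedComponentMk u).supp
        + Nat.card (L.connectedComponentMk v).supp - 1 := by
    rw [hψCu, hnu', hnu, hnv]
    omega
  have hB : Nat.card (ψe (L.connectedComponentMk v)).supp = 1 := by
    rw [hψCv, hnv']
  have hC : R.map (fun C => Nat.card (ψe C).supp) = R.map (fun C => Nat.card C.supp) := by
    apply Multiset.map_congr rfl
    intro C hCR
    have hnodup : (Finset.univ.val : Multiset L.ConnectedComponent).Nodup := Finset.univ.nodup
    rw [hR] at hCR
    obtain ⟨hCv2, hCR2⟩ := (Multiset.Nodup.mem_erase_iff (hnodup.erase _)).mp hCR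
    obtain ⟨hCu2, -⟩ := (Multiset.Nodup.mem_erase_iff hnodup).mp hCR2
    obtain ⟨w, hw⟩ := C.exists_rep
    have hw' : L.connectedComponentMk w = C := hw
    have hwT : w ∉ T := by
      intro hwt
      rw [hTsupp] at hwt
      rcases hwt with hwt | hwt
      · rw [SimpleGraph.ConnectedComponent.mem_supp_iff] at hwt
        exact hCu2 (hw' ▸ hwt.symm).symm
      · rw [SimpleGraph.ConnectedComponent.mem_supp_iff] at hwt
        exact hCv2 (hw' ▸ hwt.symm).symm
    have hψC : ψe C = L'.connectedComponentMk w := by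
      rw [← hw']
      show ψ (L.connectedComponentMk w) = L'.connectedComponentMk w
      rw [hψmk, if_neg (fun h => hwT (hSvsubT h))]
    have hsuppeq : (L'.connectedComponentMk w).supp = (L.connectedComponentMk w).supp := by
      ext x
      rw [SimpleGraph.ConnectedComponent.mem_supp_iff,
        SimpleGraph.ConnectedComponent.mem_supp_iff,
        SimpleGraph.ConnectedComponent.eq, SimpleGraph.ConnectedComponent.eq]
      constructor
      · intro h
        exact ((hreach w hwT x).mpr h.symm).symm
      · intro h
        exact ((hreach w hwT x).mp h.symm).symm
    rw [hψC, hsuppeq, hw']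
  -- putting it all together
  have hLHS : lcMultiset D = compSizes L' := by rw [hL'def]; rfl
  have hRHS : lcMultiset F = compSizes L := by rw [hLdef]; rfl
  rw [hLHS, hRHS, hκu, hκv, hcompL, hcompL', hunivmap, Multiset.map_map, hsplit,
    Multiset.map_cons, Multiset.map_cons, Multiset.map_cons, Multiset.map_cons,
    Multiset.erase_cons_head]
  simp only [Function.comp_apply]
  rw [Multiset.erase_cons_head, hA, hB, hC]

end

end CSFPaper
end

section
/- For any tree T, the internal subgraph 𝓘_T is acyclic, and if 𝓘_T is nonempty then it is connected; hence whenever it is nonempty, the internal subgraph of a tree is itself a tree. -/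
open scoped Classical

namespace CSFPaper

noncomputable section

variable {V : Type*}

/-- The internal degree of a vertex: the number of internal vertices among its
neighbors. -/
def internalDeg {W : Type} [Fintype W] (T : SimpleGraph W) (v : W) : ℕ :=
  ((T.neighborFinset v).filter fun u => 2 ≤ T.degree u).card

/-- The vertex set of the internal subgraph `𝓘_T`: the vertices of internal degree
greater than 1, together with all leaves of `T` adjacent to such vertices. -/
def internalSubVerts {W : Type} [Fintype W] (T : SimpleGraph W) : Set W :=
  {v | 1 < internalDeg T v} ∪
    {v | T.degree v = 1 ∧ ∃ u, T.Adj v u ∧ 1 < internalDeg T u}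


variable {W : Type} [Fintype W] (T : SimpleGraph W)

lemma deg2_of_internalDeg {v : W} (h : 1 < internalDeg T v) : 2 ≤ T.degree v := by
  have : internalDeg T v ≤ T.degree v := by
    rw [← SimpleGraph.card_neighborFinset_eq_degree]
    exact Finset.card_filter_le _ _
  omega

lemma unique_nbr {a x u : W} (hd : T.degree a = 1) (h1 : T.Adj a x) (h2 : T.Adj a u) :
    x = u := by
  have hc : (T.neighborFinset a).card ≤ 1 := by
    rw [SimpleGraph.card_neighborFinset_eq_degree, hd]
  exact Finset.card_le_one.mp hc x (by simpa using h1) u (by simpa using h2)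

lemma key {x a : W} (hxa : T.Adj x a) (ha : a ∈ internalSubVerts T) :
    2 ≤ T.degree a ∨ 1 < internalDeg T x := by
  rcases ha with h | ⟨hd, u, hau, hu⟩
  · exact Or.inl (deg2_of_internalDeg T h)
  · have : x = u := unique_nbr T hd hxa.symm hau
    exact Or.inr (this ▸ hu)

lemma two_internal {x u y : W} (hu : T.Adj x u) (hy : T.Adj x y) (hne : u ≠ y)
    (hdu : 2 ≤ T.degree u) (hdy : 2 ≤ T.degree y) : 1 < internalDeg T x := by
  apply Finset.one_lt_card.mpr
  exact ⟨u, by simp [hu, hdu], y, by simp [hy, hdy], hne⟩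

lemma aux_tail : ∀ {u w : W} (p : T.Walk u w), p.IsPath →
    (2 ≤ T.degree u ∨ u ∈ internalSubVerts T) → w ∈ internalSubVerts T →
    ∀ x ∈ p.support.tail, x ∈ internalSubVerts T := by
  intro u w p
  induction p with
  | nil => intro _ _ _ x hx; simp at hx
  | @cons u x w h q IH =>
    intro hp hu hw y hy
    simp only [SimpleGraph.Walk.support_cons, List.tail_cons] at hy
    have hxS : x ∈ internalSubVerts T := by
      clear IH
      revert hy hp
      cases q with
      | nil => intro _ _; exact hw
      | @cons _ y' _ h2 q' =>
        intro hp hy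
        left
        show 1 < internalDeg T x
        -- contribution from u
        have hun : 2 ≤ T.degree u ∨ 1 < internalDeg T x := by
          rcases hu with h' | h'
          · exact Or.inl h'
          · exact key T h.symm h'
        rcases hun with hun | hdone
        swap
        · exact hdone
        -- contribution from y'
        by_cases hdy : 2 ≤ T.degree y'
        · have hne : u ≠ y' := by
            have hni := ((SimpleGraph.Walk.cons_isPath_iff _ _).mp hp).2
            intro heq
            rw [heq] at hni
            exact hni (by simp)
          exact two_internal T h.symm h2 hne hun hdy
        · have hdy1 : T.degree y' = 1 := by
            have hpos : 0 < T.degree y' := by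
              rw [SimpleGraph.degree_pos_iff_exists_adj]; exact ⟨x, h2.symm⟩
            omega
          have hyw : y' = w := by
            revert hp hy
            cases q' with
            | nil => intro _ _; rfl
            | @cons _ z _ h3 q'' =>
              intro hp hy
              exfalso
              have hzx : z = x := unique_nbr T hdy1 h3 h2.symm
              have hnd := hp.support_nodup
              simp only [SimpleGraph.Walk.support_cons, List.nodup_cons] at hnd
              exact hnd.2.1 (by
                subst hzx
                simp [SimpleGraph.Walk.support_cons])
          subst hyw
          rcases key T h2 hw with h' | h'
          · omega
          · exact h'
    rw [SimpleGraph.Walk.support_eq_cons] at hy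
    rcases List.mem_cons.mp hy with rfl | hy
    · exact hxS
    · exact IH hp.of_cons (Or.inr hxS) hw y hy


lemma support_mem_internal {u w : W} (p : T.Walk u w) (hp : p.IsPath)
    (hu : u ∈ internalSubVerts T) (hw : w ∈ internalSubVerts T) :
    ∀ x ∈ p.support, x ∈ internalSubVerts T := by
  intro x hx
  rw [SimpleGraph.Walk.support_eq_cons] at hx
  rcases List.mem_cons.mp hx with rfl | hx
  · exact hu
  · exact aux_tail T p hp (Or.inr hu) hw x hx

lemma reach_induce {S : Set W} : ∀ {u w : W} (p : T.Walk u w),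
    (∀ x ∈ p.support, x ∈ S) → (hu : u ∈ S) → (hw : w ∈ S) →
    (T.induce S).Reachable ⟨u, hu⟩ ⟨w, hw⟩ := by
  intro u w p
  induction p with
  | nil => intro _ hu hw; rfl
  | @cons u x w h q IH =>
    intro hs hu hw
    have hx : x ∈ S := hs x (by simp)
    have hadj : (T.induce S).Adj ⟨u, hu⟩ ⟨x, hx⟩ := h
    exact hadj.reachable.trans (IH (fun z hz => hs z (by simp [hz])) hx hw)


/-- The internal subgraph of a tree is acyclic, and connected whenever
it is nonempty; hence it is a tree whenever it is nonempty. -/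
theorem internal_subgraph_is_tree
    {V : Type} [Fintype V] (T : SimpleGraph V) (hTc : T.Connected) (hTa : T.IsAcyclic) :
    (T.induce (internalSubVerts T)).IsAcyclic ∧
      ((internalSubVerts T).Nonempty → (T.induce (internalSubVerts T)).Connected) := by
  constructor
  · intro v c hc
    exact hTa (c.map (SimpleGraph.Embedding.induce (G := T) (internalSubVerts T)).toHom)
      (hc.map (SimpleGraph.Embedding.induce (G := T) (internalSubVerts T)).injective)
  · intro hS
    obtain ⟨s, hs⟩ := hS
    haveI : Nonempty (internalSubVerts T) := ⟨⟨s, hs⟩⟩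
    refine ⟨fun a b => ?_⟩
    obtain ⟨p⟩ := hTc.preconnected a.1 b.1
    have hsup := support_mem_internal T p.toPath.1 p.toPath.2 a.2 b.2
    have hr := reach_induce T p.toPath.1 hsup a.2 b.2
    exact hr

end

end CSFPaper
end

section
/- Let d ≥ 4 be an integer and let T be a tree of diameter d. Then every path in the internal subgraph 𝓘_T contains at most d − 4 internal edges of T. -/
open scoped Classical

namespace CSFPaper

noncomputable section

variable {V : Type*}

section Helpers

open SimpleGraph

variable {V : Type} [Fintype V] {T : SimpleGraph V}

lemma takeUntil_eq_of_adj (hT : T.IsAcyclic) {x w y : V} (q : T.Walk x w) (hq : q.IsPath)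
    (hy : y ∈ q.support) (hxy : T.Adj x y) :
    q.takeUntil y hy = Walk.cons hxy Walk.nil := by
  have h1 : (q.takeUntil y hy).IsPath := hq.takeUntil hy
  have h2 : (Walk.cons hxy Walk.nil).IsPath := by
    rw [Walk.cons_isPath_iff]
    exact ⟨Walk.IsPath.nil, by simp [hxy.ne]⟩
  exact congrArg Subtype.val (hT.path_unique ⟨q.takeUntil y hy, h1⟩ ⟨Walk.cons hxy Walk.nil, h2⟩)

lemma eq_cons_of_adj_mem (hT : T.IsAcyclic) {x w y : V} (q : T.Walk x w) (hq : q.IsPath)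
    (hy : y ∈ q.support) (hxy : T.Adj x y) :
    q = Walk.cons hxy (q.dropUntil y hy) := by
  conv_lhs => rw [← q.take_spec hy]
  rw [takeUntil_eq_of_adj hT q hq hy hxy]
  simp

lemma adj_mem_support_eq (hT : T.IsAcyclic) {x w : V} (q : T.Walk x w) (hq : q.IsPath)
    {y1 y2 : V} (h1 : T.Adj x y1) (h2 : T.Adj x y2)
    (m1 : y1 ∈ q.support) (m2 : y2 ∈ q.support) : y1 = y2 := by
  have e1 := eq_cons_of_adj_mem hT q hq m1 h1
  have e2 := eq_cons_of_adj_mem hT q hq m2 h2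
  have g1 : q.getVert 1 = y1 := by rw [e1]; simp [Walk.getVert_cons_succ]
  have g2 : q.getVert 1 = y2 := by rw [e2]; simp [Walk.getVert_cons_succ]
  rw [← g1, ← g2]

lemma ext_lemma (hT : T.IsAcyclic) {x w : V} (q : T.Walk x w) (hq : q.IsPath)
    (hx : 1 < internalDeg T x) :
    ∃ (z : V) (r : T.Walk z w), r.IsPath ∧ (∀ e ∈ q.edges, e ∈ r.edges) ∧
      r.length = q.length + 2 := by
  unfold internalDeg at hx
  obtain ⟨y1, hy1, y2, hy2, hne⟩ := Finset.one_lt_card.mp hx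
  rw [Finset.mem_filter, mem_neighborFinset] at hy1 hy2
  have hy : ∃ y, T.Adj x y ∧ 2 ≤ T.degree y ∧ y ∉ q.support := by
    by_cases m1 : y1 ∈ q.support
    · by_cases m2 : y2 ∈ q.support
      · exact absurd (adj_mem_support_eq hT q hq hy1.1 hy2.1 m1 m2) hne
      · exact ⟨y2, hy2.1, hy2.2, m2⟩
    · exact ⟨y1, hy1.1, hy1.2, m1⟩
  obtain ⟨y, hxy, hdy, hys⟩ := hy
  have hz : ∃ z, T.Adj y z ∧ z ≠ x := by
    have h2 : 1 < (T.neighborFinset y).card := hdy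
    obtain ⟨z1, hz1, z2, hz2, hz12⟩ := Finset.one_lt_card.mp h2
    rw [mem_neighborFinset] at hz1 hz2
    by_cases h : z1 = x
    · exact ⟨z2, hz2, by rw [← h]; exact hz12.symm⟩
    · exact ⟨z1, hz1, h⟩
  obtain ⟨z, hyz, hzx⟩ := hz
  have hzs : z ∉ q.support := by
    intro hzm
    have r2path : (Walk.cons hxy (Walk.cons hyz Walk.nil)).IsPath := by
      rw [Walk.cons_isPath_iff, Walk.cons_isPath_iff]
      refine ⟨⟨Walk.IsPath.nil, by simp [hyz.ne]⟩, ?_⟩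
      simp only [Walk.support_cons, Walk.support_nil, List.mem_cons, List.mem_singleton]
      push_neg
      exact ⟨hxy.ne, fun h => hzx h.symm, by simp⟩
    have heq := congrArg Subtype.val
      (hT.path_unique ⟨q.takeUntil z hzm, hq.takeUntil hzm⟩ ⟨_, r2path⟩)
    have heq' : q.takeUntil z hzm = Walk.cons hxy (Walk.cons hyz Walk.nil) := heq
    have hy' : y ∈ (q.takeUntil z hzm).support := by
      rw [heq']; simp
    exact hys (q.support_takeUntil_subset hzm hy')
  refine ⟨z, Walk.cons hyz.symm (Walk.cons hxy.symm q), ?_, ?_, ?_⟩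
  · rw [Walk.cons_isPath_iff, Walk.cons_isPath_iff]
    refine ⟨⟨hq, hys⟩, ?_⟩
    simp only [Walk.support_cons, List.mem_cons]
    push_neg
    exact ⟨hyz.ne', hzs⟩
  · intro e he
    simp only [Walk.edges_cons, List.mem_cons]
    tauto
  · simp [Walk.length_cons]

lemma trim_lemma {x w : V} (q : T.Walk x w) (hq : q.IsPath)
    (hx : x ∈ internalSubVerts T) (S : Finset (Sym2 V))
    (hS : ∀ e ∈ S, e ∈ q.edges ∧ e ∈ internalEdges T) (hne : S.Nonempty) :
    ∃ (x' : V) (q' : T.Walk x' w), q'.IsPath ∧ (∀ e ∈ S, e ∈ q'.edges) ∧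
      1 < internalDeg T x' := by
  rcases hx with hx | ⟨hdeg, u, hadj, hu⟩
  · exact ⟨x, q, hq, fun e he => (hS e he).1, hx⟩
  · cases q with
    | nil =>
      obtain ⟨e, he⟩ := hne
      simpa using (hS e he).1
    | @cons _ v _ h q' =>
      have huv : u = v := by
        have hle : (T.neighborFinset x).card ≤ 1 := le_of_eq hdeg
        exact Finset.card_le_one.mp hle u ((mem_neighborFinset T x u).mpr hadj)
          v ((mem_neighborFinset T x v).mpr h)
      refine ⟨v, q', ((Walk.cons_isPath_iff h q').mp hq).1, ?_, huv ▸ hu⟩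
      intro e he
      have h1 := (hS e he).1
      rw [Walk.edges_cons] at h1
      rcases List.mem_cons.mp h1 with heq | hmem
      · exfalso
        have h2 := (hS e he).2.2 x (by rw [heq]; exact Sym2.mem_iff.mpr (Or.inl rfl))
        omega
      · exact hmem

lemma path_len_eq_dist (hT : T.IsAcyclic) (hc : T.Connected) {u v : V}
    (p : T.Walk u v) (hp : p.IsPath) : p.length = T.dist u v := by
  obtain ⟨q, hq, hql⟩ := hc.exists_path_of_dist u v
  have heq : p = q := congrArg Subtype.val (hT.path_unique ⟨p, hp⟩ ⟨q, hq⟩)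
  rw [heq, hql]

end Helpers

/-- If `T` is a tree of diameter `d ≥ 4`, then every path in the
internal subgraph `𝓘_T` contains at most `d - 4` internal edges of `T`. -/
theorem internal_subgraph_paths_have_few_internal_edges
    {V : Type} [Fintype V] (T : SimpleGraph V) (hTc : T.Connected) (hTa : T.IsAcyclic)
    (d : ℕ) (hd4 : 4 ≤ d) (hdiam : T.diam = d)
    (a b : ↥(internalSubVerts T))
    (p : (T.induce (internalSubVerts T)).Walk a b) (hp : p.IsPath) :
    ((p.edges.map (Sym2.map (Subtype.val))).toFinset.filter
        fun e => e ∈ internalEdges T).card ≤ d - 4 := by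
  set S := ((p.edges.map (Sym2.map (Subtype.val))).toFinset.filter
      fun e => e ∈ internalEdges T) with hSdef
  rcases S.eq_empty_or_nonempty with hS0 | hSne
  · rw [hS0]; simp
  · let F : T.induce (internalSubVerts T) →g T := ⟨Subtype.val, fun {c e} h => h⟩
    set P := p.map F with hPdef
    have hP : P.IsPath := SimpleGraph.Walk.map_isPath_of_injective Subtype.val_injective hp
    have hPE : P.edges = p.edges.map (Sym2.map Subtype.val) := by
      rw [hPdef, SimpleGraph.Walk.edges_map]; rfl
    have hS : ∀ e ∈ S, e ∈ P.edges ∧ e ∈ internalEdges T := by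
      intro e he
      rw [hSdef, Finset.mem_filter, List.mem_toFinset] at he
      exact ⟨hPE ▸ he.1, he.2⟩
    obtain ⟨x', q1, hq1, hq1e, hx'⟩ := trim_lemma P hP a.2 S hS hSne
    have hS1 : ∀ e ∈ S, e ∈ q1.reverse.edges ∧ e ∈ internalEdges T := by
      intro e he
      refine ⟨?_, (hS e he).2⟩
      rw [SimpleGraph.Walk.edges_reverse, List.mem_reverse]
      exact hq1e e he
    obtain ⟨y', q2, hq2, hq2e, hy'⟩ := trim_lemma q1.reverse hq1.reverse b.2 S hS1 hSne
    obtain ⟨z1, r1, hr1, hr1e, hr1len⟩ := ext_lemma hTa q2 hq2 hy'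
    obtain ⟨z2, r2, hr2, hr2e, hr2len⟩ := ext_lemma hTa r1.reverse hr1.reverse hx'
    have hsub : S ⊆ q2.edges.toFinset := fun e he => List.mem_toFinset.mpr (hq2e e he)
    have hc1 : S.card ≤ q2.edges.toFinset.card := Finset.card_le_card hsub
    have hc2 : q2.edges.toFinset.card = q2.edges.length :=
      List.toFinset_card_of_nodup hq2.edges_nodup
    have hc3 : q2.edges.length = q2.length := SimpleGraph.Walk.length_edges q2
    have hrev : r1.reverse.length = r1.length := SimpleGraph.Walk.length_reverse r1
    have hdistz : r2.length = T.dist z2 z1 := path_len_eq_dist hTa hTc r2 hr2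
    have hediam : T.ediam ≠ ⊤ :=
      SimpleGraph.ediam_ne_top_of_diam_ne_zero (by rw [hdiam]; omega)
    have hdd : T.dist z2 z1 ≤ T.diam := SimpleGraph.dist_le_diam hediam
    rw [hdiam] at hdd
    omega


end

end CSFPaper
end

section
/- If G is a forest and e is an internal edge of G, then each of the leaf-contraction G⊙e and the dot-contraction (G⊙e) ∖ ℓ_e has exactly one fewer internal edge than G. -/
open scoped Classical

namespace CSFPaper

noncomputable section

variable {V : Type*}

section Proof19

variable {G : SimpleGraph V} {u v : V}

private lemma no_common_nbr (hG : G.IsAcyclic) {w : V}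
    (huv : G.Adj u v) (huw : G.Adj u w) (hvw : G.Adj v w) : False := by
  apply hG (SimpleGraph.Walk.cons huv (SimpleGraph.Walk.cons hvw
    (SimpleGraph.Walk.cons huw.symm SimpleGraph.Walk.nil)))
  simp [SimpleGraph.Walk.isCycle_def, SimpleGraph.Walk.isTrail_def, huv.ne, huw.ne, hvw.ne,
    Sym2.eq, Sym2.rel_iff']
  exact ⟨huv.ne.symm, huw.ne.symm⟩

private lemma dot_adj {a b : V} : (dotContract G u v).Adj a b ↔
    a ≠ b ∧ a ≠ v ∧ b ≠ v ∧
      (G.Adj a b ∨ (a = u ∧ G.Adj v b) ∨ (b = u ∧ G.Adj a v)) := Iff.rfl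

private lemma leaf_adj {a b : V} : (leafContract G u v).Adj a b ↔
    a ≠ b ∧ ((a = u ∧ b = v) ∨ (a = v ∧ b = u) ∨ (dotContract G u v).Adj a b) := Iff.rfl

variable [Fintype V]

private lemma dot_deg_other (huv : G.Adj u v)
    (hncn : ∀ w, G.Adj u w → G.Adj v w → False)
    {w : V} (hwu : w ≠ u) (hwv : w ≠ v) :
    (dotContract G u v).degree w = G.degree w := by
  show ((dotContract G u v).neighborFinset w).card = (G.neighborFinset w).card
  by_cases h : G.Adj w v
  · have hwu' : ¬ G.Adj w u := fun h' => hncn w h'.symm h.symm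
    have hset : (dotContract G u v).neighborFinset w
        = insert u ((G.neighborFinset w).erase v) := by
      ext x
      simp only [SimpleGraph.mem_neighborFinset, dot_adj, Finset.mem_insert,
        Finset.mem_erase]
      constructor
      · rintro ⟨hwx, -, hxv, hor⟩
        rcases hor with h1 | ⟨h2, -⟩ | ⟨h3, -⟩
        · exact Or.inr ⟨hxv, h1⟩
        · exact absurd h2 hwu
        · exact Or.inl h3
      · rintro (rfl | ⟨hxv, h1⟩)
        · exact ⟨hwu, hwv, huv.ne, Or.inr (Or.inr ⟨rfl, h⟩)⟩
        · exact ⟨h1.ne, hwv, hxv, Or.inl h1⟩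
    have hvmem : v ∈ G.neighborFinset w := (SimpleGraph.mem_neighborFinset _ _ _).2 h
    have hunotmem : u ∉ (G.neighborFinset w).erase v := by
      intro hx
      exact hwu' ((SimpleGraph.mem_neighborFinset _ _ _).1 (Finset.mem_of_mem_erase hx))
    rw [hset, Finset.card_insert_of_notMem hunotmem, Finset.card_erase_add_one hvmem]
  · congr 1
    ext x
    simp only [SimpleGraph.mem_neighborFinset, dot_adj]
    constructor
    · rintro ⟨hwx, -, hxv, hor⟩
      rcases hor with h1 | ⟨h2, -⟩ | ⟨-, h3⟩
      · exact h1
      · exact absurd h2 hwu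
      · exact absurd h3 h
    · intro h1
      exact ⟨h1.ne, hwv, fun hx => h (hx ▸ h1), Or.inl h1⟩

private lemma dot_deg_u (huv : G.Adj u v)
    (hncn : ∀ w, G.Adj u w → G.Adj v w → False)
    (hu2 : 2 ≤ G.degree u) (hv2 : 2 ≤ G.degree v) :
    2 ≤ (dotContract G u v).degree u := by
  obtain ⟨a, ha, hav⟩ := Finset.exists_mem_ne (s := G.neighborFinset u) hu2 v
  obtain ⟨b, hb, hbu⟩ := Finset.exists_mem_ne (s := G.neighborFinset v) hv2 u
  rw [SimpleGraph.mem_neighborFinset] at ha hb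
  have hab : a ≠ b := by rintro rfl; exact hncn a ha hb
  have h1 : 1 < ((dotContract G u v).neighborFinset u).card := by
    rw [Finset.one_lt_card]
    refine ⟨a, ?_, b, ?_, hab⟩
    · rw [SimpleGraph.mem_neighborFinset]
      exact ⟨ha.ne, huv.ne, hav, Or.inl ha⟩
    · rw [SimpleGraph.mem_neighborFinset]
      exact ⟨hbu.symm, huv.ne, hb.ne', Or.inr (Or.inl ⟨rfl, hb⟩)⟩
  exact h1

private lemma leaf_deg_v (huv : G.Adj u v) : (leafContract G u v).degree v = 1 := by
  show ((leafContract G u v).neighborFinset v).card = 1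
  have hset : (leafContract G u v).neighborFinset v = {u} := by
    ext x
    simp only [SimpleGraph.mem_neighborFinset, leaf_adj, dot_adj, Finset.mem_singleton]
    constructor
    · rintro ⟨hvx, (⟨h1, -⟩ | ⟨-, h2⟩ | ⟨-, h3, -⟩)⟩
      · exact absurd h1 huv.ne.symm
      · exact h2
      · exact absurd rfl h3
    · intro h
      subst x
      exact ⟨huv.ne', Or.inr (Or.inl ⟨trivial, rfl⟩)⟩
  rw [hset, Finset.card_singleton]

private lemma leaf_deg_other (huv : G.Adj u v)
    (hncn : ∀ w, G.Adj u w → G.Adj v w → False)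
    {w : V} (hwu : w ≠ u) (hwv : w ≠ v) :
    (leafContract G u v).degree w = G.degree w := by
  have hset : (leafContract G u v).neighborFinset w = (dotContract G u v).neighborFinset w := by
    ext x
    simp only [SimpleGraph.mem_neighborFinset, leaf_adj]
    constructor
    · rintro ⟨hwx, (⟨h1, -⟩ | ⟨h1, -⟩ | h1)⟩
      · exact absurd h1 hwu
      · exact absurd h1 hwv
      · exact h1
    · intro h1
      exact ⟨h1.ne, Or.inr (Or.inr h1)⟩
  rw [← dot_deg_other huv hncn hwu hwv]
  show ((leafContract G u v).neighborFinset w).card = ((dotContract G u v).neighborFinset w).card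
  rw [hset]

private lemma leaf_deg_u (huv : G.Adj u v)
    (hncn : ∀ w, G.Adj u w → G.Adj v w → False)
    (hu2 : 2 ≤ G.degree u) (hv2 : 2 ≤ G.degree v) :
    2 ≤ (leafContract G u v).degree u := by
  refine le_trans (dot_deg_u huv hncn hu2 hv2) ?_
  show ((dotContract G u v).neighborFinset u).card ≤ ((leafContract G u v).neighborFinset u).card
  apply Finset.card_le_card
  intro x hx
  rw [SimpleGraph.mem_neighborFinset] at hx ⊢
  exact ⟨hx.ne, Or.inr (Or.inr hx)⟩

private lemma mem_internal {H : SimpleGraph V} {a b : V} :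
    s(a, b) ∈ internalEdges H ↔ H.Adj a b ∧ 2 ≤ H.degree a ∧ 2 ≤ H.degree b := by
  constructor
  · rintro ⟨h1, h2⟩
    exact ⟨H.mem_edgeSet.mp h1, h2 a (by simp), h2 b (by simp)⟩
  · rintro ⟨h1, h2, h3⟩
    refine ⟨H.mem_edgeSet.mpr h1, ?_⟩
    intro x hx
    rcases Sym2.mem_iff.1 hx with rfl | rfl
    · exact h2
    · exact h3

end Proof19

/-- Leaf-contraction and dot-contraction of an internal edge of a
forest each produce a graph with exactly one fewer internal edge. -/
theorem contraction_removes_exactly_one_internal_edge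
    {V : Type} [Fintype V] (G : SimpleGraph V) (hG : G.IsAcyclic)
    (u v : V) (he : s(u, v) ∈ internalEdges G) :
    numInternalEdges (leafContract G u v) + 1 = numInternalEdges G ∧
      numInternalEdges (dotContract G u v) + 1 = numInternalEdges G := by
  classical
  obtain ⟨huv', hdeg⟩ := he
  have huv : G.Adj u v := G.mem_edgeSet.mp huv'
  have hu2 : 2 ≤ G.degree u := hdeg u (by simp)
  have hv2 : 2 ≤ G.degree v := hdeg v (by simp)
  have he : s(u, v) ∈ internalEdges G := ⟨huv', hdeg⟩
  have hncn : ∀ w, G.Adj u w → G.Adj v w → False :=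
    fun w h1 h2 => no_common_nbr hG huv h1 h2
  set f : V → V := fun x => if x = v then u else x with hf
  have hfv : f v = u := by simp [hf]
  have hfne : ∀ x, x ≠ v → f x = x := fun x hx => by simp [hf, hx]
  have ffact : ∀ x y : V, f x = f y → x = y ∨ (x = u ∧ y = v) ∨ (x = v ∧ y = u) := by
    intro x y hxy
    by_cases hx : x = v <;> by_cases hy : y = v
    · left; rw [hx, hy]
    · subst hx; rw [hfv, hfne y hy] at hxy
      exact Or.inr (Or.inr ⟨rfl, hxy.symm⟩)
    · subst hy; rw [hfv, hfne x hx] at hxy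
      exact Or.inr (Or.inl ⟨hxy, rfl⟩)
    · rw [hfne x hx, hfne y hy] at hxy; exact Or.inl hxy
  -- the image of an internal edge of `G` other than `s(u,v)` is an internal edge of the
  -- dot contraction
  have hsub2 : ∀ e' : Sym2 V, e' ∈ internalEdges G → e' ≠ s(u, v) →
      Sym2.map f e' ∈ internalEdges (dotContract G u v) := by
    intro e'
    induction e' using Sym2.ind with
    | _ a b =>
      intro hmem hne
      obtain ⟨hadj, h2a, h2b⟩ := mem_internal.1 hmem
      rcases eq_or_ne a v with hxa | hav
      · subst a
        have hbv : b ≠ v := hadj.ne'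
        have hbu : b ≠ u := fun h => hne (by rw [h]; exact Sym2.eq_swap)
        rw [Sym2.map_pair_eq, hfv, hfne b hbv]
        refine mem_internal.2 ⟨dot_adj.2 ⟨hbu.symm, huv.ne, hbv,
          Or.inr (Or.inl ⟨rfl, hadj⟩)⟩, dot_deg_u huv hncn hu2 hv2, ?_⟩
        rwa [dot_deg_other huv hncn hbu hbv]
      · rcases eq_or_ne b v with hxb | hbv
        · subst b
          have hau : a ≠ u := fun h => hne (by rw [h])
          rw [Sym2.map_pair_eq, hfv, hfne a hav]
          refine mem_internal.2 ⟨dot_adj.2 ⟨hau, hav, huv.ne, Or.inr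
            (Or.inr ⟨rfl, hadj⟩)⟩, ?_, dot_deg_u huv hncn hu2 hv2⟩
          rwa [dot_deg_other huv hncn hau hav]
        · rw [Sym2.map_pair_eq, hfne a hav, hfne b hbv]
          refine mem_internal.2 ⟨dot_adj.2 ⟨hadj.ne, hav, hbv, Or.inl hadj⟩, ?_, ?_⟩
          · rcases eq_or_ne a u with rfl | hau
            · exact dot_deg_u huv hncn hu2 hv2
            · rwa [dot_deg_other huv hncn hau hav]
          · rcases eq_or_ne b u with rfl | hbu
            · exact dot_deg_u huv hncn hu2 hv2
            · rwa [dot_deg_other huv hncn hbu hbv]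
  have hdotset : internalEdges (dotContract G u v)
      = Sym2.map f '' (internalEdges G \ {s(u, v)}) := by
    apply Set.Subset.antisymm
    · intro e
      induction e using Sym2.ind with
      | _ a b =>
        intro hmem
        obtain ⟨hadj, h2a, h2b⟩ := mem_internal.1 hmem
        obtain ⟨hne, hav, hbv, hor⟩ := dot_adj.1 hadj
        rcases hor with h1 | ⟨hq, h1⟩ | ⟨hq, h1⟩
        · refine ⟨s(a, b), ⟨mem_internal.2 ⟨h1, ?_, ?_⟩, ?_⟩, ?_⟩
          · rcases eq_or_ne a u with rfl | hau
            · exact hu2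
            · rwa [← dot_deg_other huv hncn hau hav]
          · rcases eq_or_ne b u with rfl | hbu
            · exact hu2
            · rwa [← dot_deg_other huv hncn hbu hbv]
          · intro hcon
            rcases Sym2.eq_iff.1 hcon with ⟨-, h3⟩ | ⟨h3, -⟩
            · exact hbv h3
            · exact hav h3
          · rw [Sym2.map_pair_eq, hfne a hav, hfne b hbv]
        · subst a
          refine ⟨s(v, b), ⟨mem_internal.2 ⟨h1, hv2, ?_⟩, ?_⟩, ?_⟩
          · have hbu : b ≠ u := fun h => hne h.symm
            rwa [← dot_deg_other huv hncn hbu hbv]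
          · intro hcon
            rcases Sym2.eq_iff.1 hcon with ⟨h3, -⟩ | ⟨-, h3⟩
            · exact huv.ne h3.symm
            · exact hne h3.symm
          · rw [Sym2.map_pair_eq, hfv, hfne b hbv]
        · subst b
          refine ⟨s(a, v), ⟨mem_internal.2 ⟨h1, ?_, hv2⟩, ?_⟩, ?_⟩
          · rwa [← dot_deg_other huv hncn hne hav]
          · intro hcon
            rcases Sym2.eq_iff.1 hcon with ⟨h3, -⟩ | ⟨h3, -⟩
            · exact hne h3
            · exact hav h3
          · rw [Sym2.map_pair_eq, hfv, hfne a hav]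
    · rintro e ⟨e', ⟨hmem, hnotin⟩, rfl⟩
      exact hsub2 e' hmem (fun h => hnotin h)
  have hleafset : internalEdges (leafContract G u v) = internalEdges (dotContract G u v) := by
    ext e
    induction e using Sym2.ind with
    | _ a b =>
      rw [mem_internal, mem_internal]
      constructor
      · rintro ⟨hadj, h2a, h2b⟩
        obtain ⟨hne, hor⟩ := leaf_adj.1 hadj
        rcases hor with ⟨rfl, rfl⟩ | ⟨rfl, rfl⟩ | hd
        · rw [leaf_deg_v huv] at h2b; omega
        · rw [leaf_deg_v huv] at h2a; omega
        · obtain ⟨-, hav, hbv, -⟩ := dot_adj.1 hd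
          refine ⟨hd, ?_, ?_⟩
          · rcases eq_or_ne a u with rfl | hau
            · exact dot_deg_u huv hncn hu2 hv2
            · rwa [dot_deg_other huv hncn hau hav, ← leaf_deg_other huv hncn hau hav]
          · rcases eq_or_ne b u with rfl | hbu
            · exact dot_deg_u huv hncn hu2 hv2
            · rwa [dot_deg_other huv hncn hbu hbv, ← leaf_deg_other huv hncn hbu hbv]
      · rintro ⟨hadj, h2a, h2b⟩
        obtain ⟨hne, hav, hbv, -⟩ := dot_adj.1 hadj
        refine ⟨leaf_adj.2 ⟨hne, Or.inr (Or.inr hadj)⟩, ?_, ?_⟩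
        · rcases eq_or_ne a u with rfl | hau
          · exact leaf_deg_u huv hncn hu2 hv2
          · rwa [leaf_deg_other huv hncn hau hav, ← dot_deg_other huv hncn hau hav]
        · rcases eq_or_ne b u with rfl | hbu
          · exact leaf_deg_u huv hncn hu2 hv2
          · rwa [leaf_deg_other huv hncn hbu hbv, ← dot_deg_other huv hncn hbu hbv]
  have key : ∀ (a b c d : V), G.Adj a b → G.Adj c d → s(a, b) ≠ s(u, v) →
      s(c, d) ≠ s(u, v) → f a = f c → f b = f d → a = c ∧ b = d := by
    intro a b c d h1 h2 hne1 hne2 hac hbd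
    rcases ffact a c hac with rfl | ⟨rfl, rfl⟩ | ⟨rfl, rfl⟩
    · rcases ffact b d hbd with rfl | ⟨rfl, rfl⟩ | ⟨rfl, rfl⟩
      · exact ⟨rfl, rfl⟩
      · exact (hncn a h1.symm h2.symm).elim
      · exact (hncn a h2.symm h1.symm).elim
    · rcases ffact b d hbd with rfl | ⟨rfl, rfl⟩ | ⟨rfl, rfl⟩
      · exact (hncn b h1 h2).elim
      · exact (h1.ne rfl).elim
      · exact (hne1 rfl).elim
    · rcases ffact b d hbd with rfl | ⟨rfl, rfl⟩ | ⟨rfl, rfl⟩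
      · exact (hncn b h2 h1).elim
      · exact (hne1 Sym2.eq_swap).elim
      · exact (h1.ne rfl).elim
  have key2 : ∀ e1 e2 : Sym2 V, e1 ∈ internalEdges G \ {s(u, v)} →
      e2 ∈ internalEdges G \ {s(u, v)} → Sym2.map f e1 = Sym2.map f e2 → e1 = e2 := by
    intro e1 e2
    induction e1 using Sym2.ind with
    | _ a b =>
      induction e2 using Sym2.ind with
      | _ c d =>
        intro he1 he2 heq
        rw [Set.mem_diff, Set.mem_singleton_iff] at he1 he2
        obtain ⟨hm1, hne1⟩ := he1
        obtain ⟨hm2, hne2⟩ := he2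
        have h1 := (mem_internal.1 hm1).1
        have h2 := (mem_internal.1 hm2).1
        rw [Sym2.map_pair_eq, Sym2.map_pair_eq, Sym2.eq_iff] at heq
        rcases heq with ⟨hac, hbd⟩ | ⟨had, hbc⟩
        · obtain ⟨rfl, rfl⟩ := key a b c d h1 h2 hne1 hne2 hac hbd
          rfl
        · obtain ⟨rfl, rfl⟩ := key a b d c h1 h2.symm hne1
            (fun h => hne2 (Sym2.eq_swap.trans h)) had hbc
          exact Sym2.eq_swap
  have hinj : Set.InjOn (Sym2.map f) (internalEdges G \ {s(u, v)}) :=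
    fun e1 he1 e2 he2 heq => key2 e1 e2 he1 he2 heq
  have hcount : ∀ H : SimpleGraph V,
      internalEdges H = Sym2.map f '' (internalEdges G \ {s(u, v)}) →
      numInternalEdges H + 1 = numInternalEdges G := by
    intro H hH
    unfold numInternalEdges
    rw [Nat.card_coe_set_eq, Nat.card_coe_set_eq, hH,
      Set.ncard_image_of_injOn hinj, Set.ncard_diff_singleton_add_one he]
  exact ⟨hcount _ (hleafset.trans hdotset), hcount _ hdotset⟩

end

end CSFPaper
end
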